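/- arXiv:2110.15125 — 8 statements merged into one kernel-verified Lean document; each statement's English description precedes it below -/
import Mathlib

section
/- Let H be a finite-dimensional real inner product space, B a self-adjoint positive definite operator on H, and A an operator on H with ⟪A x, x⟫ ≥ 0 for all x. Suppose the sequence (yⁿ) in H satisfies B (yⁿ⁺¹ - yⁿ)/τ + A yⁿ⁺ᶿ = φⁿ with τ > 0, σ ≥ 1/2, yⁿ⁺ᶿ = σ yⁿ⁺¹ + (1-σ) yⁿ. Then ‖yⁿ⁺¹‖_B ≤ ‖yⁿ‖_B + τ ‖φⁿ‖_{B⁻¹} for every n. -/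
open scoped RealInnerProductSpace

lemma stmt4_arith (τ σ a b d f : ℝ) (hτ : 0 < τ) (hσ : 1 / 2 ≤ σ)
    (ha0 : 0 ≤ a) (hb0 : 0 ≤ b) (hd0 : 0 ≤ d) (hf0 : 0 ≤ f)
    (htri : a ≤ b + d)
    (hE : (a ^ 2 - b ^ 2) / 2 + (σ - 1 / 2) * d ^ 2
        ≤ τ * (f * ((a + b) / 2 + (σ - 1 / 2) * d))) :
    a ≤ b + τ * f := by
  by_contra hcon
  push_neg at hcon
  have ha_pos : 0 < a := by nlinarith [mul_nonneg hτ.le hf0]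
  have h1 : τ * f * (a + b) < a ^ 2 - b ^ 2 := by nlinarith
  have h2 : (σ - 1 / 2) * (d ^ 2 - τ * f * d) < 0 := by nlinarith
  have hσhalf : 0 < σ - 1 / 2 := by
    rcases lt_or_ge (1 / 2 : ℝ) σ with h | h
    · linarith
    · exfalso
      have : σ = 1 / 2 := le_antisymm h hσ
      rw [this] at h2; norm_num at h2
  have h3 : d ^ 2 < τ * f * d := by nlinarith
  have h4 : d < τ * f := by nlinarith
  linarith


theorem stmt_4 {H : Type*} [NormedAddCommGroup H] [InnerProductSpace ℝ H]
    [FiniteDimensional ℝ H]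
    (B Binv A : H →ₗ[ℝ] H)
    (hB_sym : ∀ x y : H, ⟪B x, y⟫ = ⟪x, B y⟫)
    (hB_pos : ∀ x : H, x ≠ 0 → 0 < ⟪B x, x⟫)
    (hBinv : ∀ x : H, Binv (B x) = x ∧ B (Binv x) = x)
    (hA_nonneg : ∀ x : H, 0 ≤ ⟪A x, x⟫)
    (τ σ : ℝ) (hτ : 0 < τ) (hσ : 1 / 2 ≤ σ)
    (y φ : ℕ → H)
    (hscheme : ∀ n : ℕ,
      τ⁻¹ • B (y (n + 1) - y n) + A (σ • y (n + 1) + (1 - σ) • y n) = φ n) :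
    ∀ n : ℕ,
      Real.sqrt ⟪B (y (n + 1)), y (n + 1)⟫
        ≤ Real.sqrt ⟪B (y n), y n⟫ + τ * Real.sqrt ⟪Binv (φ n), φ n⟫ := by
  have hb0 : ∀ x : H, 0 ≤ ⟪B x, x⟫ := by
    intro x
    rcases eq_or_ne x 0 with h | h
    · simp [h]
    · exact (hB_pos x h).le
  have hsymm : ∀ u v : H, ⟪B u, v⟫ = ⟪B v, u⟫ := fun u v => by
    rw [hB_sym]; exact real_inner_comm _ _
  have hCS : ∀ u v : H, ⟪B u, v⟫ ≤ Real.sqrt ⟪B u, u⟫ * Real.sqrt ⟪B v, v⟫ := by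
    intro u v
    have hdisc : discrim ⟪B v, v⟫ (2 * ⟪B u, v⟫) ⟪B u, u⟫ ≤ 0 := by
      apply discrim_le_zero
      intro t
      have h := hb0 (u + t • v)
      have hexp : ⟪B (u + t • v), u + t • v⟫
          = ⟪B v, v⟫ * t ^ 2 + 2 * ⟪B u, v⟫ * t + ⟪B u, u⟫ := by
        simp only [map_add, map_smul, inner_add_left, inner_add_right,
          real_inner_smul_left, real_inner_smul_right]
        linear_combination t * hsymm v u
      linarith [hexp ▸ h]
    rw [discrim] at hdisc
    have h1 : ⟪B u, v⟫ ^ 2 ≤ ⟪B u, u⟫ * ⟪B v, v⟫ := by nlinarith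
    calc ⟪B u, v⟫ ≤ |⟪B u, v⟫| := le_abs_self _
      _ = Real.sqrt (⟪B u, v⟫ ^ 2) := (Real.sqrt_sq_eq_abs _).symm
      _ ≤ Real.sqrt (⟪B u, u⟫ * ⟪B v, v⟫) := Real.sqrt_le_sqrt h1
      _ = Real.sqrt ⟪B u, u⟫ * Real.sqrt ⟪B v, v⟫ := Real.sqrt_mul (hb0 u) _
  have hTri : ∀ u v : H, Real.sqrt ⟪B (u + v), u + v⟫
      ≤ Real.sqrt ⟪B u, u⟫ + Real.sqrt ⟪B v, v⟫ := by
    intro u v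
    have h1 : ⟪B (u + v), u + v⟫
        ≤ (Real.sqrt ⟪B u, u⟫ + Real.sqrt ⟪B v, v⟫) ^ 2 := by
      have e : ⟪B (u + v), u + v⟫ = ⟪B u, u⟫ + 2 * ⟪B u, v⟫ + ⟪B v, v⟫ := by
        simp only [map_add, inner_add_left, inner_add_right]
        linear_combination hsymm v u
      have h2 := hCS u v
      have h3 := Real.sq_sqrt (hb0 u)
      have h4 := Real.sq_sqrt (hb0 v)
      nlinarith
    calc Real.sqrt ⟪B (u + v), u + v⟫
        ≤ Real.sqrt ((Real.sqrt ⟪B u, u⟫ + Real.sqrt ⟪B v, v⟫) ^ 2) :=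
          Real.sqrt_le_sqrt h1
      _ = Real.sqrt ⟪B u, u⟫ + Real.sqrt ⟪B v, v⟫ :=
          Real.sqrt_sq (by positivity)
  have hSmul : ∀ (c : ℝ) (u : H),
      Real.sqrt ⟪B (c • u), c • u⟫ = |c| * Real.sqrt ⟪B u, u⟫ := by
    intro c u
    have e : ⟪B (c • u), c • u⟫ = c ^ 2 * ⟪B u, u⟫ := by
      simp only [map_smul, real_inner_smul_left, real_inner_smul_right]; ring
    rw [e, Real.sqrt_mul (sq_nonneg c), Real.sqrt_sq_eq_abs]
  intro n
  set y1 := y (n + 1) with hy1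
  set y0 := y n with hy0
  set δ : H := y1 - y0 with hδ
  set z : H := σ • y1 + (1 - σ) • y0 with hz
  set a := Real.sqrt ⟪B y1, y1⟫ with ha
  set b := Real.sqrt ⟪B y0, y0⟫ with hb
  set d := Real.sqrt ⟪B δ, δ⟫ with hd
  set f := Real.sqrt ⟪Binv (φ n), φ n⟫ with hf
  have ha0 : 0 ≤ a := Real.sqrt_nonneg _
  have hb0' : 0 ≤ b := Real.sqrt_nonneg _
  have hd0 : 0 ≤ d := Real.sqrt_nonneg _
  have hf0 : 0 ≤ f := Real.sqrt_nonneg _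
  have ha2 : a ^ 2 = ⟪B y1, y1⟫ := Real.sq_sqrt (hb0 _)
  have hb2 : b ^ 2 = ⟪B y0, y0⟫ := Real.sq_sqrt (hb0 _)
  have hd2 : d ^ 2 = ⟪B δ, δ⟫ := Real.sq_sqrt (hb0 _)
  -- the scheme
  have hsch : B δ = τ • (φ n - A z) := by
    have h := hscheme n
    rw [← hy1, ← hy0, ← hδ, ← hz] at h
    have h' : τ⁻¹ • B δ = φ n - A z := by
      rw [← h]; abel
    have := congrArg (fun x : H => τ • x) h'
    simpa [smul_smul, mul_inv_cancel₀ hτ.ne'] using this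
  -- bound on ⟪φ n, z⟫
  have hφz : ⟪φ n, z⟫ ≤ f * Real.sqrt ⟪B z, z⟫ := by
    have hw : B (Binv (φ n)) = φ n := (hBinv (φ n)).2
    have h1 : ⟪φ n, z⟫ = ⟪B (Binv (φ n)), z⟫ := by rw [hw]
    have h2 := hCS (Binv (φ n)) z
    have h3 : ⟪B (Binv (φ n)), Binv (φ n)⟫ = ⟪Binv (φ n), φ n⟫ := by
      rw [hw]; exact real_inner_comm _ _
    rw [h1]
    calc ⟪B (Binv (φ n)), z⟫
        ≤ Real.sqrt ⟪B (Binv (φ n)), Binv (φ n)⟫ * Real.sqrt ⟪B z, z⟫ := h2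
      _ = f * Real.sqrt ⟪B z, z⟫ := by rw [h3]
  -- key inequality: ⟪B δ, z⟫ ≤ τ * (f * ‖z‖_B)
  have hkey : ⟪B δ, z⟫ ≤ τ * (f * Real.sqrt ⟪B z, z⟫) := by
    have h1 : ⟪B δ, z⟫ = τ * (⟪φ n, z⟫ - ⟪A z, z⟫) := by
      rw [hsch, real_inner_smul_left, inner_sub_left]
    rw [h1]
    have := hA_nonneg z
    have := hφz
    nlinarith [hτ.le]
  -- identity
  have hId : ⟪B δ, z⟫ = (⟪B y1, y1⟫ - ⟪B y0, y0⟫) / 2 + (σ - 1 / 2) * ⟪B δ, δ⟫ := by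
    rw [hδ, hz]
    simp only [map_sub, inner_sub_left, inner_add_right, inner_sub_right,
      real_inner_smul_right]
    linear_combination (1 / 2) * hsymm y1 y0
  -- bound ‖z‖_B
  have hzbound : Real.sqrt ⟪B z, z⟫ ≤ (a + b) / 2 + (σ - 1 / 2) * d := by
    have hze : z = (2⁻¹ : ℝ) • (y1 + y0) + (σ - 1 / 2) • δ := by
      rw [hz, hδ]; module
    calc Real.sqrt ⟪B z, z⟫
        = Real.sqrt ⟪B ((2⁻¹ : ℝ) • (y1 + y0) + (σ - 1 / 2) • δ), _⟫ := by rw [← hze]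
      _ ≤ Real.sqrt ⟪B ((2⁻¹ : ℝ) • (y1 + y0)), (2⁻¹ : ℝ) • (y1 + y0)⟫
            + Real.sqrt ⟪B ((σ - 1 / 2) • δ), (σ - 1 / 2) • δ⟫ := hTri _ _
      _ = |(2⁻¹ : ℝ)| * Real.sqrt ⟪B (y1 + y0), y1 + y0⟫ + |σ - 1 / 2| * d := by
          rw [hSmul, hSmul]
      _ ≤ (a + b) / 2 + (σ - 1 / 2) * d := by
          rw [abs_of_nonneg (by norm_num : (0:ℝ) ≤ 2⁻¹),
            abs_of_nonneg (by linarith : (0:ℝ) ≤ σ - 1 / 2)]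
          have := hTri y1 y0
          nlinarith [hd0, hσ]
  -- triangle: a ≤ b + d
  have htri : a ≤ b + d := by
    have : y1 = y0 + δ := by rw [hδ]; abel
    calc a = Real.sqrt ⟪B (y0 + δ), y0 + δ⟫ := by rw [ha, this]
      _ ≤ b + d := hTri _ _
  -- final arithmetic
  have hE : (a ^ 2 - b ^ 2) / 2 + (σ - 1 / 2) * d ^ 2
      ≤ τ * (f * ((a + b) / 2 + (σ - 1 / 2) * d)) := by
    rw [ha2, hb2, hd2]
    calc (⟪B y1, y1⟫ - ⟪B y0, y0⟫) / 2 + (σ - 1 / 2) * ⟪B δ, δ⟫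
        = ⟪B δ, z⟫ := hId.symm
      _ ≤ τ * (f * Real.sqrt ⟪B z, z⟫) := hkey
      _ ≤ τ * (f * ((a + b) / 2 + (σ - 1 / 2) * d)) :=
          mul_le_mul_of_nonneg_left (mul_le_mul_of_nonneg_left hzbound hf0) hτ.le
  exact stmt4_arith τ σ a b d f hτ hσ ha0 hb0' hd0 hf0 htri hE
end

section
/- Under the hypotheses of the previous statement, the scheme B (yⁿ⁺¹ - yⁿ)/τ + A yⁿ⁺ᶿ = φⁿ with y⁰ = v₀ satisfies ‖yⁿ⁺¹‖_B ≤ ‖v₀‖_B + Σ_{k=0}^{n} τ ‖φᵏ‖_{B⁻¹} for all n. -/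
open scoped RealInnerProductSpace BigOperators

private lemma step_arith (a b d f τ s : ℝ) (hb : 0 ≤ b) (hd : 0 ≤ d)
    (hf : 0 ≤ f) (hτ : 0 < τ) (hs : 0 ≤ s) (hab : a ≤ b + d)
    (key : a ^ 2 - b ^ 2 ≤ τ * f * (a + b) + 2 * s * (τ * f * d - d ^ 2)) :
    a ≤ b + τ * f := by
  by_contra h
  push_neg at h
  have hd' : τ * f < d := by linarith
  have hdpos : 0 < d := lt_of_le_of_lt (by positivity) hd'
  have h0 : τ * f * d - d ^ 2 < 0 := by nlinarith [mul_pos hdpos (sub_pos.2 hd')]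
  have h1 : s * (τ * f * d - d ^ 2) ≤ 0 := mul_nonpos_of_nonneg_of_nonpos hs h0.le
  nlinarith [mul_pos (show (0:ℝ) < a - b - τ * f by linarith)
    (show (0:ℝ) < a + b by nlinarith)]

theorem stmt_5 {H : Type*} [NormedAddCommGroup H] [InnerProductSpace ℝ H]
    [FiniteDimensional ℝ H]
    (B Binv A : H →ₗ[ℝ] H)
    (hB_sym : ∀ x y : H, ⟪B x, y⟫ = ⟪x, B y⟫)
    (hB_pos : ∀ x : H, x ≠ 0 → 0 < ⟪B x, x⟫)
    (hBinv : ∀ x : H, Binv (B x) = x ∧ B (Binv x) = x)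
    (hA_nonneg : ∀ x : H, 0 ≤ ⟪A x, x⟫)
    (τ σ : ℝ) (hτ : 0 < τ) (hσ : 1 / 2 ≤ σ)
    (y φ : ℕ → H) (v₀ : H) (hy0 : y 0 = v₀)
    (hscheme : ∀ n : ℕ,
      τ⁻¹ • B (y (n + 1) - y n) + A (σ • y (n + 1) + (1 - σ) • y n) = φ n) :
    ∀ n : ℕ,
      Real.sqrt ⟪B (y (n + 1)), y (n + 1)⟫
        ≤ Real.sqrt ⟪B v₀, v₀⟫
          + ∑ k ∈ Finset.range (n + 1), τ * Real.sqrt ⟪Binv (φ k), φ k⟫ := by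
  -- nonnegativity of the quadratic form
  have hq : ∀ x : H, 0 ≤ ⟪B x, x⟫ := by
    intro x
    rcases eq_or_ne x 0 with rfl | hx
    · simp
    · exact (hB_pos x hx).le
  have hsym' : ∀ x z : H, ⟪B z, x⟫ = ⟪B x, z⟫ := fun x z =>
    (hB_sym z x).trans (real_inner_comm _ _)
  -- Cauchy-Schwarz for the B-form
  have hcs : ∀ x z : H, ⟪B x, z⟫ ^ 2 ≤ ⟪B x, x⟫ * ⟪B z, z⟫ := by
    intro x z
    have hdisc := discrim_le_zero (a := ⟪B z, z⟫) (b := 2 * ⟪B x, z⟫) (c := ⟪B x, x⟫) ?_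
    · rw [discrim] at hdisc; nlinarith [hdisc]
    · intro t
      have h0 := hq (x + t • z)
      simp only [map_add, map_smul, inner_add_left, inner_add_right,
        real_inner_smul_left, real_inner_smul_right, hsym'] at h0
      nlinarith [h0]
  set nB : H → ℝ := fun x => Real.sqrt ⟪B x, x⟫ with hnB
  have nB_nonneg : ∀ x : H, 0 ≤ nB x := fun x => Real.sqrt_nonneg _
  have nB_sq : ∀ x : H, nB x ^ 2 = ⟪B x, x⟫ := fun x => Real.sq_sqrt (hq x)
  -- inner product bound via B-norms
  have hinner : ∀ x z : H, ⟪B x, z⟫ ≤ nB x * nB z := by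
    intro x z
    have h1 : ⟪B x, z⟫ ≤ |⟪B x, z⟫| := le_abs_self _
    have h2 : |⟪B x, z⟫| = Real.sqrt (⟪B x, z⟫ ^ 2) := (Real.sqrt_sq_eq_abs _).symm
    have h3 : Real.sqrt (⟪B x, z⟫ ^ 2) ≤ Real.sqrt (⟪B x, x⟫ * ⟪B z, z⟫) :=
      Real.sqrt_le_sqrt (hcs x z)
    rw [Real.sqrt_mul (hq x)] at h3
    calc ⟪B x, z⟫ ≤ |⟪B x, z⟫| := h1
      _ = Real.sqrt (⟪B x, z⟫ ^ 2) := h2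
      _ ≤ nB x * nB z := h3
  -- triangle inequality: nB u ≤ nB v + nB (u - v)
  have htri : ∀ u v : H, nB u ≤ nB v + nB (u - v) := by
    intro u v
    have hexp : ⟪B u, u⟫ = ⟪B v, v⟫ + 2 * ⟪B v, u - v⟫ + ⟪B (u - v), u - v⟫ := by
      simp only [map_sub, inner_sub_left, inner_sub_right, hsym']
      ring
    have h1 : ⟪B u, u⟫ ≤ (nB v + nB (u - v)) ^ 2 := by
      have := hinner v (u - v)
      have := nB_sq v
      have := nB_sq (u - v)
      nlinarith
    calc nB u = Real.sqrt ⟪B u, u⟫ := rfl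
      _ ≤ Real.sqrt ((nB v + nB (u - v)) ^ 2) := Real.sqrt_le_sqrt h1
      _ = nB v + nB (u - v) := Real.sqrt_sq (by positivity)
  -- source term bound
  set f : ℕ → ℝ := fun n => Real.sqrt ⟪Binv (φ n), φ n⟫ with hf
  have hphi : ∀ (n : ℕ) (z : H), ⟪φ n, z⟫ ≤ f n * nB z := by
    intro n z
    have hw : B (Binv (φ n)) = φ n := (hBinv (φ n)).2
    have h1 : ⟪φ n, z⟫ = ⟪B (Binv (φ n)), z⟫ := by rw [hw]
    have h2 : nB (Binv (φ n)) = f n := by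
      simp only [hnB, hf]
      rw [hw, real_inner_comm]
    rw [h1]
    calc ⟪B (Binv (φ n)), z⟫ ≤ nB (Binv (φ n)) * nB z := hinner _ _
      _ = f n * nB z := by rw [h2]
  have hf_nonneg : ∀ n, 0 ≤ f n := fun n => Real.sqrt_nonneg _
  -- one-step estimate
  have step : ∀ n : ℕ, nB (y (n + 1)) ≤ nB (y n) + τ * f n := by
    intro n
    set u := y (n + 1)
    set v := y n
    set w := σ • u + (1 - σ) • v with hw
    have hBd : B (u - v) = τ • φ n - τ • A w := by
      have := hscheme n
      have h1 : τ⁻¹ • B (u - v) = φ n - A w := by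
        rw [← this]; abel
      have h2 := congrArg (fun x => τ • x) h1
      simp only [smul_sub, smul_smul, mul_inv_cancel₀ hτ.ne', one_smul] at h2
      exact h2
    -- key identity
    have hid : ⟪B (u - v), w⟫
        = (1/2) * (⟪B u, u⟫ - ⟪B v, v⟫) + (σ - 1/2) * ⟪B (u - v), u - v⟫ := by
      simp only [hw, map_sub, inner_sub_left, inner_sub_right, inner_add_left,
        inner_add_right, real_inner_smul_left, real_inner_smul_right, hsym']
      ring
    have hlhs : ⟪B (u - v), w⟫ = τ * ⟪φ n, w⟫ - τ * ⟪A w, w⟫ := by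
      rw [hBd]
      simp only [inner_sub_left, real_inner_smul_left]
    have hphiw : ⟪φ n, w⟫
        = (1/2) * (⟪φ n, u⟫ + ⟪φ n, v⟫) + (σ - 1/2) * ⟪φ n, u - v⟫ := by
      simp only [hw, inner_add_right, inner_sub_right, real_inner_smul_right]
      ring
    have hbu := hphi n u
    have hbv := hphi n v
    have hbd := hphi n (u - v)
    have hAw := hA_nonneg w
    have hsqU := nB_sq u
    have hsqV := nB_sq v
    have hsqD := nB_sq (u - v)
    refine step_arith (nB u) (nB v) (nB (u - v)) (f n) τ (σ - 1/2)
      (nB_nonneg v) (nB_nonneg (u - v)) (hf_nonneg n) hτ (by linarith) (htri u v) ?_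
    have hs' : (0:ℝ) ≤ σ - 1/2 := by linarith
    nlinarith [hid, hlhs, mul_le_mul_of_nonneg_left hbu hτ.le,
      mul_le_mul_of_nonneg_left hbv hτ.le,
      mul_le_mul_of_nonneg_left hbd (mul_nonneg hτ.le hs'),
      mul_nonneg hτ.le hAw, congrArg (fun x => τ * x) hphiw]
  -- induction
  intro n
  induction n with
  | zero =>
    have := step 0
    rw [hy0] at this
    simpa [Finset.sum_range_one] using this
  | succ n ih =>
    have h1 := step (n + 1)
    rw [Finset.sum_range_succ]
    calc nB (y (n + 2)) ≤ nB (y (n + 1)) + τ * f (n + 1) := h1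
      _ ≤ (Real.sqrt ⟪B v₀, v₀⟫ + ∑ k ∈ Finset.range (n + 1), τ * f k) + τ * f (n + 1) := by
          linarith [ih]
      _ = _ := by ring
end

section
/- Let H be a finite-dimensional real inner product space and A : H → H a linear operator. On the direct sum 𝐇 = H^{m+1}, define the block operator 𝐀 acting on (v, v₁, …, v_m) by first component Σ_i a_i A v_i and i-th component a_i b_i A v_i − a_i A v, where a_i > 0, b_i ≥ 0. If A is self-adjoint and positive semidefinite, then ⟪𝐀 𝐯, 𝐯⟫ ≥ 0 for all 𝐯 ∈ 𝐇. -/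
open scoped RealInnerProductSpace BigOperators

/-- Positivity of the block operator 𝐀: for 𝐯 = (v, v₁, …, v_m),
`⟪𝐀 𝐯, 𝐯⟫ = ⟪Σ_i a_i A v_i, v⟫ + Σ_i ⟪a_i b_i A v_i − a_i A v, v_i⟫ ≥ 0`. -/
theorem stmt_6 {H : Type*} [NormedAddCommGroup H] [InnerProductSpace ℝ H]
    [FiniteDimensional ℝ H]
    (m : ℕ) (hm : 1 ≤ m) (A : H →ₗ[ℝ] H)
    (hA_sym : ∀ x y : H, ⟪A x, y⟫ = ⟪x, A y⟫)
    (hA_nonneg : ∀ x : H, 0 ≤ ⟪A x, x⟫)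
    (a b : Fin m → ℝ) (ha : ∀ i, 0 < a i) (hb : ∀ i, 0 ≤ b i) :
    ∀ (v : H) (w : Fin m → H),
      0 ≤ ⟪∑ i, a i • A (w i), v⟫
          + ∑ i, ⟪(a i * b i) • A (w i) - a i • A v, w i⟫ := by
  intro v w
  have key : ⟪∑ i, a i • A (w i), v⟫
      + ∑ i, ⟪(a i * b i) • A (w i) - a i • A v, w i⟫
      = ∑ i, (a i * b i) * ⟪A (w i), w i⟫ := by
    rw [sum_inner, ← Finset.sum_add_distrib]
    refine Finset.sum_congr rfl fun i _ => ?_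
    rw [inner_sub_left, real_inner_smul_left, real_inner_smul_left,
      real_inner_smul_left]
    have : ⟪A v, w i⟫ = ⟪A (w i), v⟫ := by rw [hA_sym, real_inner_comm]
    rw [this]; ring
  rw [key]
  exact Finset.sum_nonneg fun i _ => mul_nonneg
    (mul_nonneg (ha i).le (hb i)) (hA_nonneg _)
end

section
/- Let u : [0,∞) → H be continuously differentiable into a finite-dimensional real inner product space H, with du/dt(t) = φ(t) − a₁ A u₁(t) and du₁/dt(t) = u(t) − b₁ u₁(t), u(0) = u₀, u₁(0) = 0, where A is symmetric positive semidefinite and a₁ > 0, b₁ ≥ 0. Then for all t ≥ 0: (‖u(t)‖² + a₁ ‖u₁(t)‖_A²)^{1/2} ≤ ‖u₀‖ + ∫_0^t ‖φ(s)‖ ds. -/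
open scoped RealInnerProductSpace

theorem stmt_8 {H : Type*} [NormedAddCommGroup H] [InnerProductSpace ℝ H]
    [FiniteDimensional ℝ H]
    (A : H →ₗ[ℝ] H)
    (hA_sym : ∀ x y : H, ⟪A x, y⟫ = ⟪x, A y⟫)
    (hA_nonneg : ∀ x : H, 0 ≤ ⟪A x, x⟫)
    (a₁ b₁ : ℝ) (ha₁ : 0 < a₁) (hb₁ : 0 ≤ b₁)
    (u u₁ φ : ℝ → H) (u₀ : H) (hφ : Continuous φ)
    (hu : ∀ t, 0 ≤ t → HasDerivAt u (φ t - a₁ • A (u₁ t)) t)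
    (hu₁ : ∀ t, 0 ≤ t → HasDerivAt u₁ (u t - b₁ • u₁ t) t)
    (hu0 : u 0 = u₀) (hu₁0 : u₁ 0 = 0) :
    ∀ t, 0 ≤ t →
      Real.sqrt (‖u t‖ ^ 2 + a₁ * ⟪A (u₁ t), u₁ t⟫)
        ≤ ‖u₀‖ + ∫ s in (0 : ℝ)..t, ‖φ s‖ := by
  intro t ht
  have hAc : Continuous A := A.continuous_of_finiteDimensional
  set E : ℝ → ℝ := fun s => ⟪u s, u s⟫ + a₁ * ⟪A (u₁ s), u₁ s⟫ with hEdef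
  have hEeq : ∀ s, E s = ‖u s‖ ^ 2 + a₁ * ⟪A (u₁ s), u₁ s⟫ := by
    intro s; simp [hEdef, real_inner_self_eq_norm_sq]
  have hEnn : ∀ s, 0 ≤ E s := by
    intro s
    have := hA_nonneg (u₁ s)
    have := real_inner_self_nonneg (x := u s)
    have := mul_nonneg ha₁.le (hA_nonneg (u₁ s))
    simp only [hEdef]
    positivity
  -- derivative of E
  have hE' : ∀ s, 0 ≤ s →
      HasDerivAt E (2 * ⟪φ s, u s⟫ - 2 * a₁ * b₁ * ⟪A (u₁ s), u₁ s⟫) s := by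
    intro s hs
    have h1 := (hu s hs).inner ℝ (hu s hs)
    have h2 : HasDerivAt (fun r => A (u₁ r)) (A (u s - b₁ • u₁ s)) s :=
      (A.toContinuousLinearMap.hasFDerivAt).comp_hasDerivAt s (hu₁ s hs)
    have h3 := h2.inner ℝ (hu₁ s hs)
    have h4 := h1.add (h3.const_mul a₁)
    convert h4 using 1
    case e'_4 => rfl
    case e'_5 => rfl
    case e'_8 => rfl
    have e1 : ⟪u s, φ s - a₁ • A (u₁ s)⟫ = ⟪φ s, u s⟫ - a₁ * ⟪A (u₁ s), u s⟫ := by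
      rw [inner_sub_right, real_inner_smul_right, real_inner_comm (u s) (φ s),
        real_inner_comm (u s) (A (u₁ s))]
    have e2 : ⟪φ s - a₁ • A (u₁ s), u s⟫ = ⟪φ s, u s⟫ - a₁ * ⟪A (u₁ s), u s⟫ := by
      rw [inner_sub_left, real_inner_smul_left]
    have e3 : ⟪A (u₁ s), u s - b₁ • u₁ s⟫ = ⟪A (u₁ s), u s⟫ - b₁ * ⟪A (u₁ s), u₁ s⟫ := by
      rw [inner_sub_right, real_inner_smul_right]
    have e4 : ⟪A (u s - b₁ • u₁ s), u₁ s⟫ = ⟪A (u₁ s), u s⟫ - b₁ * ⟪A (u₁ s), u₁ s⟫ := by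
      rw [hA_sym, inner_sub_left, real_inner_smul_left,
        real_inner_comm (u s) (A (u₁ s)), real_inner_comm (u₁ s) (A (u₁ s)), ← hA_sym]
    rw [e1, e2, e3, e4]
    ring
  -- continuity facts
  have hucont : ∀ s, 0 ≤ s → ContinuousAt u s := fun s hs => (hu s hs).continuousAt
  have hu₁cont : ∀ s, 0 ≤ s → ContinuousAt u₁ s := fun s hs => (hu₁ s hs).continuousAt
  have huIcc : Set.uIcc (0:ℝ) t = Set.Icc 0 t := Set.uIcc_of_le ht
  have key : ∀ ε : ℝ, 0 < ε →
      Real.sqrt (E t) ≤ (‖u₀‖ + ∫ s in (0:ℝ)..t, ‖φ s‖) + ε := by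
    intro ε hε
    set F : ℝ → ℝ := fun s => Real.sqrt (E s + ε ^ 2) with hFdef
    set D : ℝ → ℝ := fun s =>
      1 / (2 * Real.sqrt (E s + ε ^ 2)) *
        (2 * ⟪φ s, u s⟫ - 2 * a₁ * b₁ * ⟪A (u₁ s), u₁ s⟫) with hDdef
    have hpos : ∀ s, 0 < E s + ε ^ 2 := by
      intro s; have := hEnn s; positivity
    have hFd : ∀ s ∈ Set.uIcc (0:ℝ) t, HasDerivAt F (D s) s := by
      intro s hsmem
      rw [huIcc] at hsmem
      have hs : 0 ≤ s := hsmem.1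
      have hE'' : HasDerivAt (fun r => E r + ε ^ 2)
          (2 * ⟪φ s, u s⟫ - 2 * a₁ * b₁ * ⟪A (u₁ s), u₁ s⟫) s :=
        (hE' s hs).add_const _
      exact (Real.hasDerivAt_sqrt (hpos s).ne').comp s hE''
    have hDle : ∀ s, 0 ≤ s → D s ≤ ‖φ s‖ := by
      intro s hs
      have hsq : 0 < Real.sqrt (E s + ε ^ 2) := Real.sqrt_pos.mpr (hpos s)
      have hunorm : ‖u s‖ ≤ Real.sqrt (E s + ε ^ 2) := by
        rw [show ‖u s‖ = Real.sqrt (‖u s‖ ^ 2) from (Real.sqrt_sq (norm_nonneg _)).symm]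
        apply Real.sqrt_le_sqrt
        have h1 : 0 ≤ a₁ * ⟪A (u₁ s), u₁ s⟫ := mul_nonneg ha₁.le (hA_nonneg (u₁ s))
        have := hEeq s
        nlinarith [sq_nonneg ε]
      have hCS : ⟪φ s, u s⟫ ≤ ‖φ s‖ * ‖u s‖ := real_inner_le_norm _ _
      have hb : 0 ≤ 2 * a₁ * b₁ * ⟪A (u₁ s), u₁ s⟫ := by
        have := hA_nonneg (u₁ s); positivity
      have hnum : 2 * ⟪φ s, u s⟫ - 2 * a₁ * b₁ * ⟪A (u₁ s), u₁ s⟫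
          ≤ 2 * (‖φ s‖ * Real.sqrt (E s + ε ^ 2)) := by
        nlinarith [norm_nonneg (φ s)]
      show 1 / (2 * Real.sqrt (E s + ε ^ 2)) *
          (2 * ⟪φ s, u s⟫ - 2 * a₁ * b₁ * ⟪A (u₁ s), u₁ s⟫) ≤ ‖φ s‖
      rw [div_mul_eq_mul_div, one_mul, div_le_iff₀ (by positivity)]
      calc 2 * ⟪φ s, u s⟫ - 2 * a₁ * b₁ * ⟪A (u₁ s), u₁ s⟫
          ≤ 2 * (‖φ s‖ * Real.sqrt (E s + ε ^ 2)) := hnum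
        _ = ‖φ s‖ * (2 * Real.sqrt (E s + ε ^ 2)) := by ring
    have hDcont : ContinuousOn D (Set.uIcc (0:ℝ) t) := by
      rw [huIcc]
      intro s hsmem
      have hs : 0 ≤ s := hsmem.1
      have hcu : ContinuousAt u s := hucont s hs
      have hcu₁ : ContinuousAt u₁ s := hu₁cont s hs
      have hcAu₁ : ContinuousAt (fun r => A (u₁ r)) s := hAc.continuousAt.comp hcu₁
      have hcE : ContinuousAt E s := (hcu.inner hcu).add ((hcAu₁.inner hcu₁).const_mul a₁)
      apply ContinuousAt.continuousWithinAt
      apply ContinuousAt.mul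
      · apply ContinuousAt.div continuousAt_const
        · exact (Real.continuous_sqrt.continuousAt.comp
            (hcE.add continuousAt_const)).const_mul (2 : ℝ)
        · exact ne_of_gt (mul_pos two_pos (Real.sqrt_pos.mpr (hpos s)))
      · exact (((hφ.continuousAt).inner hcu).const_mul (2 : ℝ)).sub
          ((hcAu₁.inner hcu₁).const_mul _)
    have hDint : IntervalIntegrable D MeasureTheory.volume 0 t :=
      hDcont.intervalIntegrable
    have hftc : ∫ s in (0:ℝ)..t, D s = F t - F 0 :=
      intervalIntegral.integral_eq_sub_of_hasDerivAt hFd hDint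
    have hφint : IntervalIntegrable (fun s => ‖φ s‖) MeasureTheory.volume 0 t :=
      (hφ.norm).intervalIntegrable 0 t
    have hmono : ∫ s in (0:ℝ)..t, D s ≤ ∫ s in (0:ℝ)..t, ‖φ s‖ :=
      intervalIntegral.integral_mono_on ht hDint hφint (fun s hsmem => hDle s hsmem.1)
    have hFt : F t ≤ F 0 + ∫ s in (0:ℝ)..t, ‖φ s‖ := by linarith [hftc ▸ hmono]
    have hF0 : F 0 ≤ ‖u₀‖ + ε := by
      have hE0 : E 0 = ‖u₀‖ ^ 2 := by
        simp [hEdef, hu0, hu₁0, real_inner_self_eq_norm_sq]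
      rw [hFdef]
      simp only [hE0]
      have : ‖u₀‖ ^ 2 + ε ^ 2 ≤ (‖u₀‖ + ε) ^ 2 := by nlinarith [norm_nonneg u₀]
      calc Real.sqrt (‖u₀‖ ^ 2 + ε ^ 2) ≤ Real.sqrt ((‖u₀‖ + ε) ^ 2) :=
            Real.sqrt_le_sqrt this
        _ = ‖u₀‖ + ε := Real.sqrt_sq (by positivity)
    have hEt : Real.sqrt (E t) ≤ F t := Real.sqrt_le_sqrt (by nlinarith [sq_nonneg ε])
    linarith
  have := le_of_forall_pos_le_add key
  rw [hEeq t] at this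
  exact this
end

section
/- Let H be a finite-dimensional real inner product space, A symmetric positive semidefinite, a_i > 0, b_i ≥ 0 for i = 1,…,m. Suppose (v, v₁, …, v_m) is a C¹ solution of dv/dt + Σ_i a_i A v_i = φ(t), dv_i/dt + b_i v_i − v = 0, with v(0) = u₀ and v_i(0) = 0. Then (‖v(t)‖² + Σ_i a_i ‖v_i(t)‖_A²)^{1/2} ≤ ‖u₀‖ + ∫_0^t ‖φ(s)‖ ds for all t ≥ 0. -/
open scoped RealInnerProductSpace BigOperators

theorem stmt_9 {H : Type*} [NormedAddCommGroup H] [InnerProductSpace ℝ H]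
    [FiniteDimensional ℝ H]
    (m : ℕ) (hm : 1 ≤ m) (A : H →ₗ[ℝ] H)
    (hA_sym : ∀ x y : H, ⟪A x, y⟫ = ⟪x, A y⟫)
    (hA_nonneg : ∀ x : H, 0 ≤ ⟪A x, x⟫)
    (a b : Fin m → ℝ) (ha : ∀ i, 0 < a i) (hb : ∀ i, 0 ≤ b i)
    (v : ℝ → H) (vi : Fin m → ℝ → H) (φ : ℝ → H) (u₀ : H) (hφ : Continuous φ)
    (hv : ∀ t, 0 ≤ t → HasDerivAt v (φ t - ∑ i, a i • A (vi i t)) t)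
    (hvi : ∀ i, ∀ t, 0 ≤ t → HasDerivAt (vi i) (v t - b i • vi i t) t)
    (hv0 : v 0 = u₀) (hvi0 : ∀ i, vi i 0 = 0) :
    ∀ t, 0 ≤ t →
      Real.sqrt (‖v t‖ ^ 2 + ∑ i, a i * ⟪A (vi i t), vi i t⟫)
        ≤ ‖u₀‖ + ∫ s in (0 : ℝ)..t, ‖φ s‖ := by
  set E : ℝ → ℝ := fun t => ⟪v t, v t⟫ + ∑ i, a i * ⟪A (vi i t), vi i t⟫ with hE
  have hEself : ∀ t, ‖v t‖ ^ 2 + ∑ i, a i * ⟪A (vi i t), vi i t⟫ = E t := by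
    intro t; simp only [hE, real_inner_self_eq_norm_sq]
  have hsum_nn : ∀ t, (0:ℝ) ≤ ∑ i, a i * ⟪A (vi i t), vi i t⟫ := fun t =>
    Finset.sum_nonneg fun i _ => mul_nonneg (ha i).le (hA_nonneg _)
  have hEnn : ∀ t, 0 ≤ E t := by
    intro t
    have h1 := hsum_nn t
    have := real_inner_self_nonneg (x := v t)
    positivity
  have hvE : ∀ t, ‖v t‖ ^ 2 ≤ E t := by
    intro t
    have h1 := hsum_nn t
    have h2 : ⟪v t, v t⟫ = ‖v t‖ ^ 2 := real_inner_self_eq_norm_sq _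
    simp only [hE]; linarith
  have hE0 : E 0 = ‖u₀‖ ^ 2 := by
    simp [hE, hv0, hvi0, real_inner_self_eq_norm_sq]
  let Ac : H →L[ℝ] H := LinearMap.toContinuousLinearMap A
  set D : ℝ → ℝ := fun t =>
      2 * ⟪φ t, v t⟫ - 2 * ∑ i, a i * (b i * ⟪A (vi i t), vi i t⟫) with hD
  have hDle : ∀ t, 0 ≤ t → D t ≤ 2 * ⟪φ t, v t⟫ := by
    intro t _
    have h1 : (0:ℝ) ≤ ∑ i, a i * (b i * ⟪A (vi i t), vi i t⟫) :=
      Finset.sum_nonneg fun i _ =>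
        mul_nonneg (ha i).le (mul_nonneg (hb i) (hA_nonneg _))
    simp only [hD]; linarith
  have hE' : ∀ t, 0 ≤ t → HasDerivAt E (D t) t := by
    intro t ht
    have hvt := hv t ht
    have hc : ∀ i : Fin m, ⟪A (vi i t), v t⟫ = ⟪A (v t), vi i t⟫ := by
      intro i; rw [hA_sym, real_inner_comm]
    have hc2 : ∀ i : Fin m, ⟪v t, A (vi i t)⟫ = ⟪A (v t), vi i t⟫ := by
      intro i; rw [real_inner_comm, hc]
    have h1 : HasDerivAt (fun t => ⟪v t, v t⟫)
        (2 * ⟪φ t, v t⟫ - 2 * ∑ i, a i * ⟪A (v t), vi i t⟫) t := by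
      have := hvt.inner ℝ hvt
      convert this using 1
      · rfl
      · rfl
      simp only [inner_sub_left, inner_sub_right, inner_sum, sum_inner,
        real_inner_smul_left, real_inner_smul_right, hc, hc2,
        real_inner_comm (v t) (φ t)]
      ring
    have h2 : ∀ i : Fin m, HasDerivAt (fun t => a i * ⟪A (vi i t), vi i t⟫)
        (2 * (a i * ⟪A (v t), vi i t⟫) - 2 * (a i * (b i * ⟪A (vi i t), vi i t⟫))) t := by
      intro i
      have hvit := hvi i t ht
      have hAvi : HasDerivAt (fun t => A (vi i t)) (A (v t - b i • vi i t)) t := by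
        have := (Ac.hasFDerivAt (x := vi i t)).comp_hasDerivAt t hvit
        exact this
      have := ((hAvi.inner ℝ hvit)).const_mul (a i)
      convert this using 1
      · rfl
      · rfl
      simp only [map_sub, map_smul, inner_sub_left, inner_sub_right,
        real_inner_smul_left, real_inner_smul_right, hc, hc2]
      ring
    have hsum := HasDerivAt.fun_sum (u := Finset.univ) (fun i (_ : i ∈ Finset.univ) => h2 i)
    have htot := h1.add hsum
    convert htot using 1
    · rfl
    · rfl
    · rfl
    rw [hD, Finset.sum_sub_distrib, ← Finset.mul_sum, ← Finset.mul_sum]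
    ring
  -- main estimate
  intro t₀ ht₀
  rw [hEself]
  apply le_of_forall_pos_le_add
  intro δ hδ
  set ε := δ ^ 2 with hε
  have hεpos : 0 < ε := by positivity
  set ψ : ℝ → ℝ := fun t => Real.sqrt (E t + ε) with hψ
  have hψ' : ∀ t, 0 ≤ t → HasDerivAt ψ (1 / (2 * Real.sqrt (E t + ε)) * D t) t := by
    intro t ht
    have hpos : 0 < E t + ε := by have := hEnn t; linarith
    exact (Real.hasDerivAt_sqrt hpos.ne').comp t ((hE' t ht).add_const ε)
  have hψle : ∀ t, 0 ≤ t → 1 / (2 * Real.sqrt (E t + ε)) * D t ≤ ‖φ t‖ := by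
    intro t ht
    have hpos : 0 < E t + ε := by have := hEnn t; linarith
    have hs : 0 < Real.sqrt (E t + ε) := Real.sqrt_pos.mpr hpos
    have hvle : ‖v t‖ ≤ Real.sqrt (E t + ε) := by
      have heq : ‖v t‖ = Real.sqrt (‖v t‖ ^ 2) := (Real.sqrt_sq (norm_nonneg _)).symm
      rw [heq]
      exact Real.sqrt_le_sqrt (by have := hvE t; linarith)
    have h1 : D t ≤ 2 * (‖φ t‖ * Real.sqrt (E t + ε)) := by
      have h2 : ⟪φ t, v t⟫ ≤ ‖φ t‖ * ‖v t‖ := real_inner_le_norm _ _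
      have h3 : ‖φ t‖ * ‖v t‖ ≤ ‖φ t‖ * Real.sqrt (E t + ε) :=
        mul_le_mul_of_nonneg_left hvle (norm_nonneg _)
      have := hDle t ht
      linarith
    rw [div_mul_eq_mul_div, one_mul, div_le_iff₀ (by positivity)]
    calc D t ≤ 2 * (‖φ t‖ * Real.sqrt (E t + ε)) := h1
    _ = ‖φ t‖ * (2 * Real.sqrt (E t + ε)) := by ring
  set g : ℝ → ℝ := fun t => ψ t - ∫ s in (0:ℝ)..t, ‖φ s‖ with hg
  have hg' : ∀ t, 0 ≤ t →
      HasDerivAt g (1 / (2 * Real.sqrt (E t + ε)) * D t - ‖φ t‖) t := by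
    intro t ht
    exact (hψ' t ht).sub ((hφ.norm.integral_hasStrictDerivAt 0 t).hasDerivAt)
  have hanti : AntitoneOn g (Set.Ici 0) := by
    apply antitoneOn_of_deriv_nonpos (convex_Ici 0)
    · intro t ht
      exact ((hg' t ht).continuousAt).continuousWithinAt
    · intro t ht
      rw [interior_Ici] at ht
      exact (hg' t (le_of_lt ht)).differentiableAt.differentiableWithinAt
    · intro t ht
      rw [interior_Ici] at ht
      rw [(hg' t (le_of_lt ht)).deriv]
      have := hψle t (le_of_lt ht)
      linarith
  have hkey : g t₀ ≤ g 0 := hanti (Set.self_mem_Ici) (Set.mem_Ici.mpr ht₀) ht₀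
  have hg0 : g 0 = Real.sqrt (‖u₀‖ ^ 2 + ε) := by
    simp [hg, hψ, hE0]
  have hψ0 : Real.sqrt (‖u₀‖ ^ 2 + ε) ≤ ‖u₀‖ + δ := by
    rw [hε]
    have h : ‖u₀‖ ^ 2 + δ ^ 2 ≤ (‖u₀‖ + δ) ^ 2 := by nlinarith [norm_nonneg u₀, hδ.le]
    calc Real.sqrt (‖u₀‖ ^ 2 + δ ^ 2) ≤ Real.sqrt ((‖u₀‖ + δ) ^ 2) := Real.sqrt_le_sqrt h
    _ = ‖u₀‖ + δ := Real.sqrt_sq (by positivity)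
  have hfin : Real.sqrt (E t₀) ≤ ψ t₀ := Real.sqrt_le_sqrt (by linarith [hεpos])
  have hlast : ψ t₀ ≤ Real.sqrt (‖u₀‖ ^ 2 + ε) + ∫ s in (0:ℝ)..t₀, ‖φ s‖ := by
    rw [hg0] at hkey; simp only [hg] at hkey; linarith
  linarith
end

section
/- Suppose k is C² on (0,∞) with k(t) ≥ 0, k'(t) ≤ 0, and k''(t) ≥ 0 for all t > 0, and k is continuous on [0,∞). Then k is of positive type: for every T > 0 and every continuous ψ : [0,T] → ℝ, ∫_0^T ψ(t) ∫_0^t k(t−s) ψ(s) ds dt ≥ 0. -/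
open MeasureTheory Set intervalIntegral Filter Topology

lemma integrable_of_bdd {α : Type*} [MeasurableSpace α] {μ : Measure α} [IsFiniteMeasure μ]
    {f : α → ℝ} (hf : AEStronglyMeasurable f μ) {C : ℝ} (h : ∀ᵐ x ∂μ, ‖f x‖ ≤ C) :
    Integrable f μ :=
  Integrable.mono' (integrable_const C) hf h

lemma finite_restrict_Icc (a b : ℝ) : IsFiniteMeasure (volume.restrict (Icc a b)) := by
  constructor
  rw [Measure.restrict_apply_univ]
  exact measure_Icc_lt_top

lemma tri_nonneg (T σ : ℝ) (hσ : 0 ≤ σ) (hσT : σ ≤ T) (ψ : ℝ → ℝ) (hψ : Continuous ψ) :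
    0 ≤ ∫ p : ℝ × ℝ, max (σ - |p.1 - p.2|) 0 * (ψ p.1 * ψ p.2)
      ∂((volume.restrict (Icc (0:ℝ) T)).prod (volume.restrict (Icc (0:ℝ) T))) := by
  have hT : 0 ≤ T := le_trans hσ hσT
  set μ := volume.restrict (Icc (0:ℝ) T) with hμ
  set ν := volume.restrict (Icc (-T) T) with hν
  haveI : IsFiniteMeasure μ := finite_restrict_Icc 0 T
  haveI : IsFiniteMeasure ν := finite_restrict_Icc (-T) T
  set e : ℝ → ℝ → ℝ := fun t u => if u ∈ Icc (t - σ) t then (1:ℝ) else 0 with he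
  -- pointwise kernel representation
  have key : ∀ t ∈ Icc (0:ℝ) T, ∀ s ∈ Icc (0:ℝ) T,
      ∫ u, e t u * e s u ∂ν = max (σ - |t - s|) 0 := by
    intro t ht s hs
    have hprod : ∀ u, e t u * e s u
        = (Icc (max (t - σ) (s - σ)) (min t s)).indicator (fun _ => (1:ℝ)) u := by
      intro u
      have hset : Icc (max (t - σ) (s - σ)) (min t s) = Icc (t - σ) t ∩ Icc (s - σ) s :=
        (Set.Icc_inter_Icc).symm
      rw [hset]
      by_cases h1 : u ∈ Icc (t - σ) t <;> by_cases h2 : u ∈ Icc (s - σ) s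
      · rw [Set.indicator_of_mem (Set.mem_inter h1 h2)]
        simp only [he, if_pos h1, if_pos h2, one_mul]
      · rw [Set.indicator_of_notMem (fun h => h2 h.2)]
        simp only [he, if_pos h1, if_neg h2, one_mul]
      · rw [Set.indicator_of_notMem (fun h => h1 h.1)]
        simp only [he, if_neg h1, zero_mul]
      · rw [Set.indicator_of_notMem (fun h => h1 h.1)]
        simp only [he, if_neg h1, zero_mul]
    rw [integral_congr_ae (Eventually.of_forall hprod),
      MeasureTheory.integral_indicator measurableSet_Icc]
    rw [setIntegral_const]
    have hsub : Icc (max (t - σ) (s - σ)) (min t s) ⊆ Icc (-T) T := by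
      apply Icc_subset_Icc
      · have := ht.1; have := hσT; simp only [le_max_iff]; left; linarith
      · exact (min_le_left t s).trans ht.2
    rw [hν, measureReal_def, Measure.restrict_apply measurableSet_Icc,
      Set.inter_eq_self_of_subset_left hsub, Real.volume_Icc]
    have habs : max t s - min t s = |t - s| := by
      rw [max_sub_min_eq_abs, abs_sub_comm]
    have hval : min t s - max (t - σ) (s - σ) = σ - |t - s| := by
      rw [max_sub_sub_right]
      linarith
    rw [hval]
    rcases le_total 0 (σ - |t - s|) with h | h
    · rw [ENNReal.toReal_ofReal h, max_eq_left h, smul_eq_mul, mul_one]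
    · rw [ENNReal.ofReal_of_nonpos h, max_eq_right h]
      simp
  -- bound for ψ
  obtain ⟨M, hM⟩ := isCompact_Icc.exists_bound_of_continuousOn (hψ.continuousOn (s := Icc (0:ℝ) T))
  set Φ : ℝ × ℝ → ℝ → ℝ := fun p u => (e p.1 u * ψ p.1) * (e p.2 u * ψ p.2) with hΦ
  have he1 : ∀ t u, |e t u| ≤ 1 := by
    intro t u
    simp only [he]
    split <;> norm_num
  have hem : Measurable (fun q : ℝ × ℝ => e q.1 q.2) := by
    apply Measurable.ite _ measurable_const measurable_const
    have hset : {q : ℝ × ℝ | q.2 ∈ Icc (q.1 - σ) q.1}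
        = {q : ℝ × ℝ | q.1 - σ ≤ q.2} ∩ {q : ℝ × ℝ | q.2 ≤ q.1} := by
      ext q; simp [Set.mem_Icc]
    rw [hset]
    exact (measurableSet_le (measurable_fst.sub measurable_const) measurable_snd).inter
      (measurableSet_le measurable_snd measurable_fst)
  have hprodmeas : ((μ.prod μ).prod ν)
      = ((volume.prod volume).prod volume).restrict ((Icc 0 T ×ˢ Icc 0 T) ×ˢ Icc (-T) T) := by
    rw [hμ, hν, Measure.prod_restrict, Measure.prod_restrict]
  have hInt : Integrable (Function.uncurry Φ) ((μ.prod μ).prod ν) := by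
    apply integrable_of_bdd (C := (1 * M) * (1 * M))
    · apply Measurable.aestronglyMeasurable
      apply Measurable.mul
      · exact (hem.comp (measurable_fst.fst.prodMk measurable_snd)).mul
          (hψ.measurable.comp measurable_fst.fst)
      · exact (hem.comp (measurable_fst.snd.prodMk measurable_snd)).mul
          (hψ.measurable.comp measurable_fst.snd)
    · rw [hprodmeas]
      filter_upwards [ae_restrict_mem ((measurableSet_Icc.prod measurableSet_Icc).prod
        measurableSet_Icc)] with q hq
      obtain ⟨⟨hq1, hq2⟩, _⟩ := hq
      have b1 : |e q.1.1 q.2 * ψ q.1.1| ≤ 1 * M := by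
        rw [abs_mul]
        exact mul_le_mul (he1 _ _) (hM _ hq1) (abs_nonneg _) zero_le_one
      have b2 : |e q.1.2 q.2 * ψ q.1.2| ≤ 1 * M := by
        rw [abs_mul]
        exact mul_le_mul (he1 _ _) (hM _ hq2) (abs_nonneg _) zero_le_one
      calc ‖Function.uncurry Φ q‖ = |e q.1.1 q.2 * ψ q.1.1| * |e q.1.2 q.2 * ψ q.1.2| := by
            simp [hΦ, Function.uncurry, abs_mul]
        _ ≤ (1 * M) * (1 * M) := by
            apply mul_le_mul b1 b2 (abs_nonneg _) _
            exact le_trans (abs_nonneg _) b1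
  have hswap := integral_integral_swap hInt
  have h1 : ∫ p : ℝ × ℝ, max (σ - |p.1 - p.2|) 0 * (ψ p.1 * ψ p.2) ∂(μ.prod μ)
      = ∫ p : ℝ × ℝ, ∫ u, Φ p u ∂ν ∂(μ.prod μ) := by
    apply MeasureTheory.integral_congr_ae
    have hmem : ∀ᵐ p ∂(μ.prod μ), p ∈ Icc (0:ℝ) T ×ˢ Icc (0:ℝ) T := by
      rw [hμ, Measure.prod_restrict]
      exact ae_restrict_mem (measurableSet_Icc.prod measurableSet_Icc)
    filter_upwards [hmem] with p hp
    rw [← key p.1 hp.1 p.2 hp.2, ← MeasureTheory.integral_mul_const]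
    exact MeasureTheory.integral_congr_ae (Eventually.of_forall fun u => by simp [hΦ]; ring)
  rw [h1, hswap]
  apply MeasureTheory.integral_nonneg
  intro u
  show (0:ℝ) ≤ ∫ p : ℝ × ℝ, Φ p u ∂(μ.prod μ)
  have : ∫ p : ℝ × ℝ, Φ p u ∂(μ.prod μ)
      = (∫ t, e t u * ψ t ∂μ) * (∫ t, e t u * ψ t ∂μ) :=
    integral_prod_mul (fun t => e t u * ψ t) (fun t => e t u * ψ t)
  rw [this]
  exact mul_self_nonneg _

lemma repr_lemma (g : ℝ → ℝ) (c : ℝ) (hc : c < 0) (hg : ContDiffOn ℝ 2 g (Set.Ioi c))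
    (T : ℝ) (hT : 0 < T) :
    ∀ x ∈ Icc (0:ℝ) T, g x = g T + deriv g T * (x - T)
      + ∫ σ in Icc (0:ℝ) T, max (σ - x) 0 * deriv (deriv g) σ := by
  have hIoi : IsOpen (Ioi c) := isOpen_Ioi
  have hgd : ∀ y ∈ Ioi c, HasDerivAt g (deriv g y) y := fun y hy =>
    ((hg.differentiableOn (by norm_num)).differentiableAt (hIoi.mem_nhds hy)).hasDerivAt
  have hg' : ContDiffOn ℝ 1 (deriv g) (Ioi c) := hg.deriv_of_isOpen hIoi (by norm_num)
  have hg'c : ContinuousOn (deriv g) (Ioi c) := hg'.continuousOn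
  have hg'd : ∀ y ∈ Ioi c, HasDerivAt (deriv g) (deriv (deriv g) y) y := fun y hy =>
    ((hg'.differentiableOn (by norm_num)).differentiableAt (hIoi.mem_nhds hy)).hasDerivAt
  have hg''c : ContinuousOn (deriv (deriv g)) (Ioi c) :=
    (hg'.deriv_of_isOpen hIoi (by norm_num) : ContDiffOn ℝ 0 _ _).continuousOn
  set dd := deriv (deriv g) with hdd
  intro x hx
  obtain ⟨hx0, hxT⟩ := hx
  have hsub : Icc x T ⊆ Ioi c := fun y hy => lt_of_lt_of_le hc (le_trans hx0 hy.1)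
  have hsub0 : Icc (0:ℝ) T ⊆ Ioi c := fun y hy => lt_of_lt_of_le hc hy.1
  have huIcc : uIcc x T = Icc x T := uIcc_of_le hxT
  -- B1
  have B1 : ∫ u in x..T, deriv g u = g T - g x := by
    apply integral_eq_sub_of_hasDerivAt
    · intro y hy
      rw [huIcc] at hy
      exact hgd y (hsub hy)
    · rw [intervalIntegrable_iff_integrableOn_Icc_of_le hxT]
      exact (hg'c.mono hsub).integrableOn_compact isCompact_Icc
  -- B2
  have B2 : ∀ u ∈ Icc x T, deriv g u = deriv g T - ∫ σ in u..T, dd σ := by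
    intro u hu
    have hsubu : Icc u T ⊆ Ioi c := fun y hy => hsub ⟨le_trans hu.1 hy.1, hy.2⟩
    have : ∫ σ in u..T, dd σ = deriv g T - deriv g u := by
      apply integral_eq_sub_of_hasDerivAt
      · intro y hy
        rw [uIcc_of_le hu.2] at hy
        exact hg'd y (hsubu hy)
      · rw [intervalIntegrable_iff_integrableOn_Icc_of_le hu.2]
        exact (hg''c.mono hsubu).integrableOn_compact isCompact_Icc
    rw [this]; ring
  set Φ : ℝ → ℝ := fun u => ∫ σ in u..T, dd σ with hΦ
  have hΦd : ∀ y ∈ Icc x T, HasDerivAt Φ (-(dd y)) y := by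
    intro y hy
    apply intervalIntegral.integral_hasDerivAt_left
    · rw [intervalIntegrable_iff_integrableOn_Icc_of_le hy.2]
      exact (hg''c.mono (fun z hz => hsub ⟨le_trans hy.1 hz.1, hz.2⟩)).integrableOn_compact
        isCompact_Icc
    · exact hg''c.stronglyMeasurableAtFilter hIoi y (hsub hy)
    · exact hg''c.continuousAt (hIoi.mem_nhds (hsub hy))
  have hΦcont : ContinuousOn Φ (Icc x T) := fun y hy =>
    ((hΦd y hy).continuousAt).continuousWithinAt
  -- integration by parts
  have IBP : ∫ y in x..T, Φ y = ∫ y in x..T, (y - x) * dd y := by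
    have h := intervalIntegral.integral_mul_deriv_eq_deriv_mul
      (u := Φ) (u' := fun y => -(dd y)) (v := fun y => y - x) (v' := fun _ => 1)
      (a := x) (b := T)
      (fun y hy => hΦd y (huIcc ▸ hy))
      (fun y _ => (hasDerivAt_id y).sub_const x)
      (by
        rw [intervalIntegrable_iff_integrableOn_Icc_of_le hxT]
        exact (((hg''c.mono hsub).neg).integrableOn_compact isCompact_Icc))
      intervalIntegrable_const
    simp only [mul_one] at h
    have hΦT : Φ T = 0 := integral_same
    rw [hΦT] at h
    rw [h]
    have hneg : ∫ y in x..T, -dd y * (y - x) = - ∫ y in x..T, (y - x) * dd y := by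
      rw [← intervalIntegral.integral_neg]
      apply intervalIntegral.integral_congr
      intro y _
      ring
    rw [hneg]
    ring
  -- combine
  have hΦint : IntervalIntegrable Φ volume x T := by
    rw [intervalIntegrable_iff_integrableOn_Icc_of_le hxT]
    exact hΦcont.integrableOn_compact isCompact_Icc
  have step : g x = g T + deriv g T * (x - T) + ∫ y in x..T, (y - x) * dd y := by
    have e1 : ∫ u in x..T, deriv g u = ∫ u in x..T, (deriv g T - Φ u) := by
      apply intervalIntegral.integral_congr
      intro u hu
      rw [huIcc] at hu
      exact B2 u hu
    rw [e1, intervalIntegral.integral_sub intervalIntegrable_const hΦint,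
      intervalIntegral.integral_const, IBP] at B1
    have : (T - x) • deriv g T - ∫ y in x..T, (y - x) * dd y = g T - g x := B1
    rw [smul_eq_mul] at this
    linarith
  rw [step]
  have hsplit : ∫ σ in Icc (0:ℝ) T, max (σ - x) 0 * dd σ = ∫ y in x..T, (y - x) * dd y := by
    have hIoc : ∫ σ in Icc (0:ℝ) T, max (σ - x) 0 * dd σ
        = ∫ σ in (0:ℝ)..T, max (σ - x) 0 * dd σ := by
      rw [MeasureTheory.integral_Icc_eq_integral_Ioc,
        intervalIntegral.integral_of_le hT.le]
    have hint1 : IntervalIntegrable (fun σ => max (σ - x) 0 * dd σ) volume 0 x := by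
      rw [intervalIntegrable_iff_integrableOn_Icc_of_le hx0]
      apply ContinuousOn.integrableOn_compact isCompact_Icc
      exact (Continuous.continuousOn ((continuous_id.sub continuous_const).max
        continuous_const)).mul (hg''c.mono (fun y hy => hsub0 ⟨hy.1, le_trans hy.2 hxT⟩))
    have hint2 : IntervalIntegrable (fun σ => max (σ - x) 0 * dd σ) volume x T := by
      rw [intervalIntegrable_iff_integrableOn_Icc_of_le hxT]
      apply ContinuousOn.integrableOn_compact isCompact_Icc
      exact (Continuous.continuousOn ((continuous_id.sub continuous_const).max
        continuous_const)).mul (hg''c.mono hsub)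
    rw [hIoc, ← intervalIntegral.integral_add_adjacent_intervals hint1 hint2]
    have hzero : ∫ σ in (0:ℝ)..x, max (σ - x) 0 * dd σ = 0 := by
      have heq : EqOn (fun σ => max (σ - x) 0 * dd σ) (fun _ => (0:ℝ)) (uIcc 0 x) := by
        intro σ hσ
        rw [uIcc_of_le hx0] at hσ
        show max (σ - x) 0 * dd σ = 0
        rw [max_eq_right (by linarith [hσ.2]), zero_mul]
      rw [intervalIntegral.integral_congr heq, intervalIntegral.integral_zero]
    have hsecond : ∫ σ in x..T, max (σ - x) 0 * dd σ = ∫ y in x..T, (y - x) * dd y := by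
      apply intervalIntegral.integral_congr
      intro σ hσ
      rw [huIcc] at hσ
      show max (σ - x) 0 * dd σ = (σ - x) * dd σ
      rw [max_eq_left (by linarith [hσ.1])]
    rw [hzero, hsecond, zero_add]
  rw [hsplit]

lemma key_lemma (g : ℝ → ℝ) (c : ℝ) (hc : c < 0) (hg : ContDiffOn ℝ 2 g (Set.Ioi c))
    (T : ℝ) (hT : 0 < T) (hgT : 0 ≤ g T) (hg1 : deriv g T ≤ 0)
    (hg2 : ∀ x ∈ Icc (0:ℝ) T, 0 ≤ deriv (deriv g) x)
    (ψ : ℝ → ℝ) (hψ : Continuous ψ) :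
    0 ≤ ∫ t in (0:ℝ)..T, ψ t * ∫ s in (0:ℝ)..t, g (t - s) * ψ s := by
  have hIoi : IsOpen (Ioi c) := isOpen_Ioi
  have hsub0 : Icc (0:ℝ) T ⊆ Ioi c := fun y hy => lt_of_lt_of_le hc hy.1
  have hgc : ContinuousOn g (Ioi c) := hg.continuousOn
  have hg' : ContDiffOn ℝ 1 (deriv g) (Ioi c) := hg.deriv_of_isOpen hIoi (by norm_num)
  have hg''c : ContinuousOn (deriv (deriv g)) (Ioi c) :=
    (hg'.deriv_of_isOpen hIoi (by norm_num) : ContDiffOn ℝ 0 _ _).continuousOn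
  set dd := deriv (deriv g) with hdd
  set μ := volume.restrict (Icc (0:ℝ) T) with hμ
  haveI : IsFiniteMeasure μ := finite_restrict_Icc 0 T
  set G : ℝ → ℝ := fun x => g |x| with hG
  have hGcont : Continuous G :=
    hgc.comp_continuous continuous_abs (fun x => lt_of_lt_of_le hc (abs_nonneg x))
  set F : ℝ × ℝ → ℝ := fun p => G (p.1 - p.2) * (ψ p.1 * ψ p.2) with hF
  have hFcont : Continuous F :=
    (hGcont.comp (continuous_fst.sub continuous_snd)).mul
      ((hψ.comp continuous_fst).mul (hψ.comp continuous_snd))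
  have hμsq : μ.prod μ = (volume.prod volume).restrict (Icc (0:ℝ) T ×ˢ Icc (0:ℝ) T) := by
    rw [hμ, Measure.prod_restrict]
  have hFint : Integrable F (μ.prod μ) := by
    rw [hμsq]
    exact hFcont.continuousOn.integrableOn_compact (isCompact_Icc.prod isCompact_Icc)
  set Q : ℝ := ∫ t in (0:ℝ)..T, ψ t * ∫ s in (0:ℝ)..t, g (t - s) * ψ s with hQdef
  -- Part A: 2 Q = ∫ F
  set H1 : ℝ × ℝ → ℝ := fun p => if p.2 ≤ p.1 then F p else 0 with hH1
  set H2 : ℝ × ℝ → ℝ := fun p => if p.1 < p.2 then F p else 0 with hH2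
  have hsum : ∀ p, H1 p + H2 p = F p := by
    intro p
    by_cases h : p.2 ≤ p.1
    · simp [hH1, hH2, h, not_lt.mpr h]
    · simp [hH1, hH2, h, not_le.mp h]
  have hH1m : AEStronglyMeasurable H1 (μ.prod μ) :=
    (Measurable.ite (measurableSet_le measurable_snd measurable_fst)
      hFcont.measurable measurable_const).aestronglyMeasurable
  have hH2m : AEStronglyMeasurable H2 (μ.prod μ) :=
    (Measurable.ite (measurableSet_lt measurable_fst measurable_snd)
      hFcont.measurable measurable_const).aestronglyMeasurable
  have hHbound : ∀ (H : ℝ × ℝ → ℝ), (∀ p, H p = F p ∨ H p = 0) →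
      ∀ᵐ p ∂(μ.prod μ), ‖H p‖ ≤ ‖F p‖ := by
    intro H hH
    filter_upwards with p
    rcases hH p with h | h <;> rw [h] <;> simp [norm_nonneg]
  have hH1int : Integrable H1 (μ.prod μ) :=
    Integrable.mono' hFint.norm hH1m (hHbound H1 (fun p => by
      by_cases h : p.2 ≤ p.1 <;> simp [hH1, h]))
  have hH2int : Integrable H2 (μ.prod μ) :=
    Integrable.mono' hFint.norm hH2m (hHbound H2 (fun p => by
      by_cases h : p.1 < p.2 <;> simp [hH2, h]))
  -- lower-triangle integral equals Q
  have base : ∀ t ∈ Icc (0:ℝ) T, ∫ s in Ioo (0:ℝ) t, F (t, s)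
      = ψ t * ∫ s in (0:ℝ)..t, g (t - s) * ψ s := by
    intro t ht
    rw [intervalIntegral.integral_of_le ht.1, MeasureTheory.integral_Ioc_eq_integral_Ioo,
      ← MeasureTheory.integral_const_mul]
    apply setIntegral_congr_fun measurableSet_Ioo
    intro s hs
    show F (t, s) = ψ t * (g (t - s) * ψ s)
    rw [hF]
    show G (t - s) * (ψ t * ψ s) = ψ t * (g (t - s) * ψ s)
    rw [hG]
    show g |t - s| * (ψ t * ψ s) = ψ t * (g (t - s) * ψ s)
    rw [abs_of_nonneg (by linarith [hs.2] : (0:ℝ) ≤ t - s)]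
    ring
  have inner_eq : ∀ t ∈ Icc (0:ℝ) T, ∀ J : Set ℝ, MeasurableSet J →
      (J ∩ Icc (0:ℝ) T = Icc 0 t ∨ J ∩ Icc (0:ℝ) T = Ico 0 t) →
      ∫ s, J.indicator (fun s => F (t, s)) s ∂μ
        = ψ t * ∫ s in (0:ℝ)..t, g (t - s) * ψ s := by
    intro t ht J hJmeas hJ
    rw [MeasureTheory.integral_indicator hJmeas, hμ, Measure.restrict_restrict hJmeas]
    rcases hJ with h | h <;> rw [h]
    · rw [MeasureTheory.integral_Icc_eq_integral_Ioc,
        MeasureTheory.integral_Ioc_eq_integral_Ioo]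
      exact base t ht
    · rw [MeasureTheory.integral_Ico_eq_integral_Ioo]
      exact base t ht
  have hmemIcc : ∀ᵐ t ∂μ, t ∈ Icc (0:ℝ) T := by
    rw [hμ]; exact ae_restrict_mem measurableSet_Icc
  have hQIcc : Q = ∫ t, (ψ t * ∫ s in (0:ℝ)..t, g (t - s) * ψ s) ∂μ := by
    rw [hμ, show (∫ t, (ψ t * ∫ s in (0:ℝ)..t, g (t - s) * ψ s)
        ∂(volume.restrict (Icc (0:ℝ) T)))
      = ∫ t in Icc (0:ℝ) T, ψ t * ∫ s in (0:ℝ)..t, g (t - s) * ψ s from rfl,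
      MeasureTheory.integral_Icc_eq_integral_Ioc, ← intervalIntegral.integral_of_le hT.le]
  have hQ1 : ∫ p, H1 p ∂(μ.prod μ) = Q := by
    rw [MeasureTheory.integral_prod _ hH1int, hQIcc]
    refine MeasureTheory.integral_congr_ae ?_
    filter_upwards [hmemIcc] with t ht
    have hIic : Iic t ∩ Icc (0:ℝ) T = Icc 0 t := by
      ext s
      simp only [mem_inter_iff, mem_Iic, mem_Icc]
      constructor
      · rintro ⟨h1, h2, _⟩; exact ⟨h2, h1⟩
      · rintro ⟨h1, h2⟩; exact ⟨h2, h1, h2.trans ht.2⟩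
    rw [← inner_eq t ht (Iic t) measurableSet_Iic (Or.inl hIic)]
    apply MeasureTheory.integral_congr_ae
    filter_upwards with s
    simp [hH1, indicator_apply, mem_Iic]
  have hFsymm : ∀ p : ℝ × ℝ, F (p.2, p.1) = F p := by
    intro p
    show G (p.2 - p.1) * (ψ p.2 * ψ p.1) = G (p.1 - p.2) * (ψ p.1 * ψ p.2)
    rw [hG]
    show g |p.2 - p.1| * (ψ p.2 * ψ p.1) = g |p.1 - p.2| * (ψ p.1 * ψ p.2)
    rw [abs_sub_comm]
    ring
  have hQ2 : ∫ p, H2 p ∂(μ.prod μ) = Q := by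
    have hswapped : ∫ p, H2 p ∂(μ.prod μ) = ∫ p : ℝ × ℝ, H2 p.swap ∂(μ.prod μ) :=
      (MeasureTheory.integral_prod_swap H2).symm
    rw [hswapped]
    have hH2swap : ∀ p : ℝ × ℝ, H2 p.swap = if p.2 < p.1 then F p else 0 := by
      intro p
      show (if p.2 < p.1 then F (p.2, p.1) else 0) = if p.2 < p.1 then F p else 0
      rw [hFsymm]
    have hH2'int : Integrable (fun p : ℝ × ℝ => if p.2 < p.1 then F p else 0) (μ.prod μ) := by
      apply Integrable.mono' hFint.norm
      · exact (Measurable.ite (measurableSet_lt measurable_snd measurable_fst)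
          hFcont.measurable measurable_const).aestronglyMeasurable
      · exact hHbound _ (fun p => by by_cases h : p.2 < p.1 <;> simp [h])
    rw [show (fun p : ℝ × ℝ => H2 p.swap) = fun p : ℝ × ℝ => if p.2 < p.1 then F p else 0
      from funext hH2swap]
    rw [MeasureTheory.integral_prod _ hH2'int, hQIcc]
    refine MeasureTheory.integral_congr_ae ?_
    filter_upwards [hmemIcc] with t ht
    have hIio : Iio t ∩ Icc (0:ℝ) T = Ico 0 t := by
      ext s
      simp only [mem_inter_iff, mem_Iio, mem_Ico, mem_Icc]
      constructor
      · rintro ⟨h1, h2, _⟩; exact ⟨h2, h1⟩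
      · rintro ⟨h1, h2⟩; exact ⟨h2, h1, h2.le.trans ht.2⟩
    rw [← inner_eq t ht (Iio t) measurableSet_Iio (Or.inr hIio)]
    apply MeasureTheory.integral_congr_ae
    filter_upwards with s
    simp [indicator_apply, mem_Iio]
  have hFQ : ∫ p, F p ∂(μ.prod μ) = Q + Q := by
    have h : ∫ p, F p ∂(μ.prod μ) = ∫ p, (H1 p + H2 p) ∂(μ.prod μ) :=
      MeasureTheory.integral_congr_ae (Eventually.of_forall fun p => (hsum p).symm)
    rw [h, MeasureTheory.integral_add hH1int hH2int, hQ1, hQ2]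
  -- Part C: decomposition via Taylor representation
  have hrepr := repr_lemma g c hc hg T hT
  set b : ℝ := -deriv g T with hb
  have hb0 : 0 ≤ b := by rw [hb]; linarith
  set f1 : ℝ × ℝ → ℝ := fun p => g T * (ψ p.1 * ψ p.2) with hf1
  set f2 : ℝ × ℝ → ℝ := fun p => b * (max (T - |p.1 - p.2|) 0 * (ψ p.1 * ψ p.2)) with hf2
  set f3 : ℝ × ℝ → ℝ := fun p =>
    (∫ σ in Icc (0:ℝ) T, max (σ - |p.1 - p.2|) 0 * deriv (deriv g) σ) * (ψ p.1 * ψ p.2)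
    with hf3
  have hmemsq : ∀ᵐ p ∂(μ.prod μ), p ∈ Icc (0:ℝ) T ×ˢ Icc (0:ℝ) T := by
    rw [hμsq]
    exact ae_restrict_mem (measurableSet_Icc.prod measurableSet_Icc)
  have hdecomp : ∀ᵐ p ∂(μ.prod μ), F p = f1 p + f2 p + f3 p := by
    filter_upwards [hmemsq] with p hp
    obtain ⟨hp1, hp2⟩ := hp
    have habs : |p.1 - p.2| ∈ Icc (0:ℝ) T := by
      constructor
      · exact abs_nonneg _
      · rw [abs_sub_le_iff]
        constructor <;> linarith [hp1.1, hp1.2, hp2.1, hp2.2]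
    have hx := hrepr _ habs
    show G (p.1 - p.2) * (ψ p.1 * ψ p.2) = f1 p + f2 p + f3 p
    rw [hG]
    show g |p.1 - p.2| * (ψ p.1 * ψ p.2) = f1 p + f2 p + f3 p
    rw [hx, hf1, hf2, hf3, hb]
    show _ = g T * (ψ p.1 * ψ p.2)
      + -deriv g T * (max (T - |p.1 - p.2|) 0 * (ψ p.1 * ψ p.2))
      + (∫ σ in Icc (0:ℝ) T, max (σ - |p.1 - p.2|) 0 * deriv (deriv g) σ) * (ψ p.1 * ψ p.2)
    rw [max_eq_left (by linarith [habs.2] : (0:ℝ) ≤ T - |p.1 - p.2|)]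
    ring
  have hf1cont : Continuous f1 :=
    continuous_const.mul ((hψ.comp continuous_fst).mul (hψ.comp continuous_snd))
  have hf2cont : Continuous f2 :=
    continuous_const.mul
      (((continuous_const.sub (continuous_fst.sub continuous_snd).abs).max
        continuous_const).mul ((hψ.comp continuous_fst).mul (hψ.comp continuous_snd)))
  have hf1int : Integrable f1 (μ.prod μ) := by
    rw [hμsq]
    exact hf1cont.continuousOn.integrableOn_compact (isCompact_Icc.prod isCompact_Icc)
  have hf2int : Integrable f2 (μ.prod μ) := by
    rw [hμsq]
    exact hf2cont.continuousOn.integrableOn_compact (isCompact_Icc.prod isCompact_Icc)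
  have hsplit : ∫ p, F p ∂(μ.prod μ)
      = (∫ p, f1 p ∂(μ.prod μ)) + (∫ p, f2 p ∂(μ.prod μ))
        + ∫ p, (F p - f1 p - f2 p) ∂(μ.prod μ) := by
    have hFf1 : Integrable (fun p => F p - f1 p) (μ.prod μ) := hFint.sub hf1int
    rw [MeasureTheory.integral_sub hFf1 hf2int, MeasureTheory.integral_sub hFint hf1int]
    ring
  have hthird : ∫ p, (F p - f1 p - f2 p) ∂(μ.prod μ) = ∫ p, f3 p ∂(μ.prod μ) := by
    refine MeasureTheory.integral_congr_ae ?_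
    filter_upwards [hdecomp] with p hp
    rw [hp]; ring
  -- bounds
  obtain ⟨M, hM⟩ := isCompact_Icc.exists_bound_of_continuousOn
    (hψ.continuousOn (s := Icc (0:ℝ) T))
  obtain ⟨C, hC⟩ := isCompact_Icc.exists_bound_of_continuousOn (hg''c.mono hsub0)
  have hM0 : 0 ≤ M := le_trans (norm_nonneg _) (hM 0 ⟨le_rfl, hT.le⟩)
  have hC0 : 0 ≤ C := le_trans (norm_nonneg _) (hC 0 ⟨le_rfl, hT.le⟩)
  -- term 1
  have ht1 : 0 ≤ ∫ p, f1 p ∂(μ.prod μ) := by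
    rw [hf1]
    rw [MeasureTheory.integral_const_mul]
    have := MeasureTheory.integral_prod_mul (μ := μ) (ν := μ) ψ ψ
    rw [this]
    exact mul_nonneg hgT (mul_self_nonneg _)
  -- term 2
  have ht2 : 0 ≤ ∫ p, f2 p ∂(μ.prod μ) := by
    rw [hf2, MeasureTheory.integral_const_mul]
    apply mul_nonneg hb0
    have := tri_nonneg T T hT.le le_rfl ψ hψ
    rw [hμ]
    exact this
  -- term 3 via Fubini
  set Φ3 : ℝ × ℝ → ℝ → ℝ := fun p σ =>
    max (σ - |p.1 - p.2|) 0 * deriv (deriv g) σ * (ψ p.1 * ψ p.2) with hΦ3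
  have hbig : (μ.prod μ).prod μ
      = ((volume.prod volume).prod volume).restrict
          ((Icc (0:ℝ) T ×ˢ Icc (0:ℝ) T) ×ˢ Icc (0:ℝ) T) := by
    rw [hμsq, hμ, Measure.prod_restrict]
  have hΦ3meas : AEStronglyMeasurable (Function.uncurry Φ3) ((μ.prod μ).prod μ) := by
    apply Measurable.aestronglyMeasurable
    apply Measurable.mul
    · apply Measurable.mul
      · exact ((continuous_snd.sub ((continuous_fst.comp continuous_fst).sub
          (continuous_snd.comp continuous_fst)).abs).max continuous_const).measurable
      · exact (measurable_deriv (deriv g)).comp measurable_snd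
    · exact (hψ.measurable.comp (measurable_fst.comp measurable_fst)).mul
        (hψ.measurable.comp (measurable_snd.comp measurable_fst))
  have hΦ3int : Integrable (Function.uncurry Φ3) ((μ.prod μ).prod μ) := by
    apply integrable_of_bdd hΦ3meas (C := T * C * (M * M))
    rw [hbig]
    filter_upwards [ae_restrict_mem ((measurableSet_Icc.prod measurableSet_Icc).prod
      measurableSet_Icc)] with q hq
    obtain ⟨⟨hq1, hq2⟩, hq3⟩ := hq
    have h1 : |max (q.2 - |q.1.1 - q.1.2|) 0| ≤ T := by
      rw [abs_of_nonneg (le_max_right _ _)]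
      exact max_le (by linarith [abs_nonneg (q.1.1 - q.1.2), hq3.2]) hT.le
    have h2 : ‖deriv (deriv g) q.2‖ ≤ C := hC _ hq3
    have h3 : ‖ψ q.1.1‖ ≤ M := hM _ hq1
    have h4 : ‖ψ q.1.2‖ ≤ M := hM _ hq2
    rw [Real.norm_eq_abs] at h2 h3 h4 ⊢
    show |max (q.2 - |q.1.1 - q.1.2|) 0 * deriv (deriv g) q.2 * (ψ q.1.1 * ψ q.1.2)|
      ≤ T * C * (M * M)
    rw [abs_mul, abs_mul, abs_mul]
    exact mul_le_mul (mul_le_mul h1 h2 (abs_nonneg _) hT.le)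
      (mul_le_mul h3 h4 (abs_nonneg _) hM0)
      (mul_nonneg (abs_nonneg _) (abs_nonneg _)) (mul_nonneg hT.le hC0)
  have ht3 : 0 ≤ ∫ p, f3 p ∂(μ.prod μ) := by
    have heq : ∫ p, f3 p ∂(μ.prod μ) = ∫ p, (∫ σ, Φ3 p σ ∂μ) ∂(μ.prod μ) := by
      refine MeasureTheory.integral_congr_ae ?_
      filter_upwards with p
      show f3 p = ∫ σ, Φ3 p σ ∂μ
      rw [hμ]
      show (∫ σ in Icc (0:ℝ) T, max (σ - |p.1 - p.2|) 0 * deriv (deriv g) σ)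
          * (ψ p.1 * ψ p.2)
        = ∫ σ, (max (σ - |p.1 - p.2|) 0 * deriv (deriv g) σ * (ψ p.1 * ψ p.2))
          ∂(volume.restrict (Icc (0:ℝ) T))
      rw [← MeasureTheory.integral_mul_const]
    rw [heq, integral_integral_swap hΦ3int]
    apply MeasureTheory.integral_nonneg_of_ae
    filter_upwards [hmemIcc] with σ hσ
    have hval : ∫ p, Φ3 p σ ∂(μ.prod μ) = deriv (deriv g) σ
        * ∫ p : ℝ × ℝ, max (σ - |p.1 - p.2|) 0 * (ψ p.1 * ψ p.2) ∂(μ.prod μ) := by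
      rw [← MeasureTheory.integral_const_mul]
      refine MeasureTheory.integral_congr_ae ?_
      filter_upwards with p
      show max (σ - |p.1 - p.2|) 0 * deriv (deriv g) σ * (ψ p.1 * ψ p.2) = _
      ring
    show (0:ℝ) ≤ ∫ p, Φ3 p σ ∂(μ.prod μ)
    rw [hval]
    apply mul_nonneg (hg2 σ hσ)
    have htri := tri_nonneg T σ hσ.1 hσ.2 ψ hψ
    rw [hμ]
    exact htri
  have hfin : (0:ℝ) ≤ Q + Q := by
    rw [← hFQ, hsplit, hthird]
    linarith [ht1, ht2, ht3]
  linarith [hfin]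

theorem stmt_11 (k : ℝ → ℝ)
    (hk_cont : ContinuousOn k (Set.Ici (0 : ℝ)))
    (hk_smooth : ContDiffOn ℝ 2 k (Set.Ioi (0 : ℝ)))
    (hk_nonneg : ∀ t : ℝ, 0 < t → 0 ≤ k t)
    (hk_decr : ∀ t : ℝ, 0 < t → deriv k t ≤ 0)
    (hk_convex : ∀ t : ℝ, 0 < t → 0 ≤ deriv (deriv k) t) :
    ∀ T : ℝ, 0 < T → ∀ ψ : ℝ → ℝ, ContinuousOn ψ (Set.Icc 0 T) →
      0 ≤ ∫ t in (0 : ℝ)..T, ψ t * ∫ s in (0 : ℝ)..t, k (t - s) * ψ s := by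
  intro T hT ψ hψ
  set kt : ℝ → ℝ := fun x => k (max x 0) with hkt
  set ψt : ℝ → ℝ := fun x => ψ (max 0 (min x T)) with hψt
  have hktcont : Continuous kt :=
    hk_cont.comp_continuous (continuous_id.max continuous_const) (fun x => mem_Ici.mpr (le_max_right _ _))
  have hψtcont : Continuous ψt :=
    hψ.comp_continuous (continuous_const.max (continuous_id.min continuous_const))
      (fun x => ⟨le_max_left _ _, max_le hT.le (min_le_right _ _)⟩)
  have hkt_eq : ∀ x, 0 ≤ x → kt x = k x := by
    intro x hx
    rw [hkt]
    simp [max_eq_left hx]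
  have hψt_eq : ∀ x ∈ Icc (0:ℝ) T, ψt x = ψ x := by
    intro x hx
    rw [hψt]
    simp [min_eq_left hx.2, max_eq_right hx.1]
  have hgoal_eq : (∫ t in (0:ℝ)..T, ψ t * ∫ s in (0:ℝ)..t, k (t - s) * ψ s)
      = ∫ t in (0:ℝ)..T, ψt t * ∫ s in (0:ℝ)..t, kt (t - s) * ψt s := by
    apply intervalIntegral.integral_congr
    intro t ht
    rw [uIcc_of_le hT.le] at ht
    show ψ t * ∫ s in (0:ℝ)..t, k (t - s) * ψ s
      = ψt t * ∫ s in (0:ℝ)..t, kt (t - s) * ψt s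
    rw [hψt_eq t ht]
    congr 1
    apply intervalIntegral.integral_congr
    intro s hs
    rw [uIcc_of_le ht.1] at hs
    show k (t - s) * ψ s = kt (t - s) * ψt s
    rw [hψt_eq s ⟨hs.1, hs.2.trans ht.2⟩, hkt_eq _ (by linarith [hs.2])]
  rw [hgoal_eq]
  have hkt_smooth : ContDiffOn ℝ 2 kt (Ioi (0:ℝ)) :=
    hk_smooth.congr (fun x hx => hkt_eq x (le_of_lt hx))
  have hd1 : ∀ x : ℝ, 0 < x → deriv kt x = deriv k x := by
    intro x hx
    apply Filter.EventuallyEq.deriv_eq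
    filter_upwards [Ioi_mem_nhds hx] with y hy
    exact hkt_eq y (le_of_lt hy)
  have hd2 : ∀ x : ℝ, 0 < x → deriv (deriv kt) x = deriv (deriv k) x := by
    intro x hx
    apply Filter.EventuallyEq.deriv_eq
    filter_upwards [Ioi_mem_nhds hx] with y hy
    exact hd1 y hy
  have hcont2 : Continuous fun q : ℝ × ℝ => ∫ s in (0:ℝ)..q.2, kt (q.2 - s + q.1) * ψt s := by
    apply intervalIntegral.continuous_parametric_intervalIntegral_of_continuous (μ := volume)
      (f := fun (q : ℝ × ℝ) (s : ℝ) => kt (q.2 - s + q.1) * ψt s)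
    · show Continuous fun z : (ℝ × ℝ) × ℝ => kt (z.1.2 - z.2 + z.1.1) * ψt z.2
      exact (hktcont.comp (((continuous_snd.comp continuous_fst).sub continuous_snd).add
        (continuous_fst.comp continuous_fst))).mul (hψtcont.comp continuous_snd)
    · exact continuous_snd
  have hΦcont : Continuous fun ε : ℝ =>
      ∫ t in (0:ℝ)..T, ψt t * ∫ s in (0:ℝ)..t, kt (t - s + ε) * ψt s := by
    apply intervalIntegral.continuous_parametric_intervalIntegral_of_continuous' (μ := volume)
      (f := fun (ε : ℝ) (t : ℝ) => ψt t * ∫ s in (0:ℝ)..t, kt (t - s + ε) * ψt s)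
    show Continuous fun z : ℝ × ℝ => ψt z.2 * ∫ s in (0:ℝ)..z.2, kt (z.2 - s + z.1) * ψt s
    exact (hψtcont.comp continuous_snd).mul hcont2
  have hpos : ∀ ε : ℝ, 0 < ε →
      0 ≤ ∫ t in (0:ℝ)..T, ψt t * ∫ s in (0:ℝ)..t, kt (t - s + ε) * ψt s := by
    intro ε hε
    have hsm : ContDiffOn ℝ 2 (fun x => kt (x + ε)) (Ioi (-ε)) := by
      apply ContDiffOn.comp hkt_smooth ((contDiff_id.add contDiff_const).contDiffOn)
      intro x hx
      show x + ε ∈ Ioi (0:ℝ)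
      simp only [mem_Ioi] at hx ⊢
      linarith
    have h0 : 0 ≤ (fun x => kt (x + ε)) T := by
      show 0 ≤ kt (T + ε)
      rw [hkt_eq _ (by linarith)]
      exact hk_nonneg _ (by linarith)
    have h1 : deriv (fun x => kt (x + ε)) T ≤ 0 := by
      rw [deriv_comp_add_const kt ε T, hd1 _ (by linarith)]
      exact hk_decr _ (by linarith)
    have h2 : ∀ x ∈ Icc (0:ℝ) T, 0 ≤ deriv (deriv (fun x => kt (x + ε))) x := by
      intro x hx
      have e1 : deriv (fun y => kt (y + ε)) = fun y => deriv kt (y + ε) :=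
        funext fun y => deriv_comp_add_const kt ε y
      rw [e1, deriv_comp_add_const (deriv kt) ε x, hd2 _ (by linarith [hx.1])]
      exact hk_convex _ (by linarith [hx.1])
    have hkey := key_lemma (fun x => kt (x + ε)) (-ε) (neg_lt_zero.mpr hε) hsm T hT
      h0 h1 h2 ψt hψtcont
    have : (∫ t in (0:ℝ)..T, ψt t * ∫ s in (0:ℝ)..t, (fun x => kt (x + ε)) (t - s) * ψt s)
        = ∫ t in (0:ℝ)..T, ψt t * ∫ s in (0:ℝ)..t, kt (t - s + ε) * ψt s := rfl
    rwa [this] at hkey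
  have hlim : Tendsto (fun ε : ℝ =>
        ∫ t in (0:ℝ)..T, ψt t * ∫ s in (0:ℝ)..t, kt (t - s + ε) * ψt s)
      (nhdsWithin 0 (Ioi 0))
      (𝓝 (∫ t in (0:ℝ)..T, ψt t * ∫ s in (0:ℝ)..t, kt (t - s) * ψt s)) := by
    have h0 : (∫ t in (0:ℝ)..T, ψt t * ∫ s in (0:ℝ)..t, kt (t - s + 0) * ψt s)
        = ∫ t in (0:ℝ)..T, ψt t * ∫ s in (0:ℝ)..t, kt (t - s) * ψt s := by
      norm_num
    have h := (hΦcont.tendsto 0).mono_left (nhdsWithin_le_nhds (s := Ioi (0:ℝ)))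
    rwa [h0] at h
  exact ge_of_tendsto hlim (eventually_mem_nhdsWithin.mono fun ε hε => hpos ε hε)
end

section
/- Under the hypotheses of Theorem 1 with the additional assumption that D is symmetric positive definite and commutes with A, the solution u of the Volterra integrodifferential equation satisfies ‖u(t)‖_D ≤ ‖u₀‖_D + ∫_0^t ‖φ(s)‖_D ds for all t ≥ 0. -/
open scoped RealInnerProductSpace
open MeasureTheory Set intervalIntegral

section helpers
variable {E : Type*} [NormedAddCommGroup E] [NormedSpace ℝ E]

lemma II_smul_cont {f : ℝ → ℝ} {g : ℝ → E} {a b : ℝ}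
    (hf : IntervalIntegrable f volume a b) (hg : Continuous g) :
    IntervalIntegrable (fun x => f x • g x) volume a b := by
  obtain ⟨C, hC⟩ := (isCompact_uIcc (a := a) (b := b)).exists_bound_of_continuousOn hg.continuousOn
  rw [intervalIntegrable_iff] at hf ⊢
  refine Integrable.mono' (hf.norm.const_mul C)
    (hf.aestronglyMeasurable.smul hg.aestronglyMeasurable) ?_
  filter_upwards [ae_restrict_mem measurableSet_uIoc] with x hx
  rw [norm_smul, mul_comm]
  exact mul_le_mul_of_nonneg_right (hC x (uIoc_subset_uIcc hx)) (norm_nonneg _)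

lemma kII {k : ℝ → ℝ} (hk : LocallyIntegrableOn k (Ici (0:ℝ)))
    {a b : ℝ} (ha : 0 ≤ a) (hb : 0 ≤ b) :
    IntervalIntegrable k volume a b := by
  rw [intervalIntegrable_iff]
  have h : IntegrableOn k (Icc 0 (max a b)) :=
    hk.integrableOn_compact_subset (fun x hx => hx.1) isCompact_Icc
  refine h.mono_set ?_
  refine (uIoc_subset_uIcc).trans ?_
  rw [uIcc]
  exact Icc_subset_Icc (le_min ha hb) le_rfl

lemma kIIabs {k : ℝ → ℝ} (hk : LocallyIntegrableOn k (Ici (0:ℝ)))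
    {a b : ℝ} (ha : 0 ≤ a) (hb : 0 ≤ b) :
    IntervalIntegrable (fun r => |k r|) volume a b := by
  simpa [Real.norm_eq_abs] using (kII hk ha hb).norm

lemma conv_eq {k : ℝ → ℝ} {g : ℝ → E} (t : ℝ) :
    (∫ s in (0:ℝ)..t, k (t - s) • g s) = ∫ r in (0:ℝ)..t, k r • g (t - r) := by
  have h := intervalIntegral.integral_comp_sub_left (a := 0) (b := t)
    (fun r => k r • g (t - r)) t
  simp only [sub_self, sub_zero] at h
  rw [← h]
  refine intervalIntegral.integral_congr fun s _ => ?_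
  simp [sub_sub_cancel]

lemma conv_II {k : ℝ → ℝ} (hk : LocallyIntegrableOn k (Ici (0:ℝ)))
    {g : ℝ → E} (hg : Continuous g) {t : ℝ} (ht : 0 ≤ t) :
    IntervalIntegrable (fun s => k (t - s) • g s) volume 0 t := by
  have hgc : Continuous fun r => g (t - r) := hg.comp (continuous_const.sub continuous_id)
  have h := (II_smul_cont (kII hk le_rfl ht) hgc).comp_sub_left t
  simp only [sub_zero, sub_self, sub_sub_cancel] at h
  exact h.symm

lemma conv_continuousOn {k : ℝ → ℝ} (hk : LocallyIntegrableOn k (Ici (0:ℝ)))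
    {g : ℝ → E} (hg : Continuous g) :
    ContinuousOn (fun t => ∫ s in (0:ℝ)..t, k (t - s) • g s) (Ici (0:ℝ)) := by
  simp only [conv_eq]
  intro t₀ ht₀
  rw [Metric.continuousWithinAt_iff]
  intro ε hε
  set T : ℝ := t₀ + 1 with hT
  have ht₀' : (0:ℝ) ≤ t₀ := ht₀
  have hT0 : 0 ≤ T := by linarith
  -- bound for g on Icc 0 T
  obtain ⟨C, hC⟩ := (isCompact_Icc (a := (0:ℝ)) (b := T)).exists_bound_of_continuousOn
    hg.continuousOn
  have hC0 : 0 ≤ C := le_trans (norm_nonneg (g 0)) (hC 0 ⟨le_refl _, hT0⟩)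
  -- primitive of |k|
  set KK : ℝ → ℝ := fun x => ∫ r in (0:ℝ)..x, |k r| with hKK
  have hKT0 : 0 ≤ KK T :=
    intervalIntegral.integral_nonneg hT0 fun r _ => abs_nonneg _
  have hKmono : ∀ p q : ℝ, 0 ≤ p → p ≤ q → KK p ≤ KK q := by
    intro p q hp hpq
    refine intervalIntegral.integral_mono_interval le_rfl hp hpq ?_ (kIIabs hk le_rfl (hp.trans hpq))
    exact Filter.Eventually.of_forall fun r => abs_nonneg _
  have hKadd : ∀ p q : ℝ, 0 ≤ p → 0 ≤ q → KK q - KK p = ∫ r in p..q, |k r| := by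
    intro p q hp hq
    have := intervalIntegral.integral_add_adjacent_intervals
      (kIIabs hk le_rfl hp) (kIIabs hk hp hq)
    simp only [hKK] at *
    linarith [this]
  -- uniform continuity of g on Icc 0 T
  have hgu := (isCompact_Icc (a := (0:ℝ)) (b := T)).uniformContinuousOn_of_continuous
    hg.continuousOn
  rw [Metric.uniformContinuousOn_iff] at hgu
  obtain ⟨δ₁, hδ₁, hgu⟩ := hgu (ε / (2 * (KK T + 1))) (by positivity)
  -- continuity of KK at t₀ within Icc 0 T
  have hKKcont : ContinuousOn KK (Icc 0 T) := by
    have hint : IntegrableOn (fun r => |k r|) (uIcc 0 T) := by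
      rw [uIcc_of_le hT0, ← intervalIntegrable_iff_integrableOn_Icc_of_le hT0]
      exact kIIabs hk le_rfl hT0
    have := intervalIntegral.continuousOn_primitive_interval hint
    rwa [uIcc_of_le hT0] at this
  have hK2 := hKKcont t₀ ⟨ht₀', by linarith⟩
  rw [Metric.continuousWithinAt_iff] at hK2
  obtain ⟨δ₂, hδ₂, hK2⟩ := hK2 (ε / (2 * (C + 1))) (by positivity)
  refine ⟨min (min δ₁ δ₂) 1, by positivity, ?_⟩
  intro t ht hdist
  have hd1 : dist t t₀ < δ₁ := lt_of_lt_of_le hdist ((min_le_left _ _).trans (min_le_left _ _))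
  have hd2 : dist t t₀ < δ₂ := lt_of_lt_of_le hdist ((min_le_left _ _).trans (min_le_right _ _))
  have hd3 : dist t t₀ < 1 := lt_of_lt_of_le hdist (min_le_right _ _)
  have htT : t ≤ T := by
    rw [Real.dist_eq] at hd3
    have := abs_lt.mp hd3
    linarith [this.1, this.2]
  have ht' : (0:ℝ) ≤ t := ht
  have htI : t ∈ Icc (0:ℝ) T := ⟨ht', htT⟩
  -- key estimate
  have est : ∀ p q : ℝ, 0 ≤ p → p ≤ q → q ≤ T → dist q p < δ₁ →
      dist (∫ r in (0:ℝ)..q, k r • g (q - r)) (∫ r in (0:ℝ)..p, k r • g (p - r))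
        ≤ ε / (2 * (KK T + 1)) * KK T + C * (KK q - KK p) := by
    intro p q hp hpq hqT hd
    have hq : 0 ≤ q := hp.trans hpq
    have hgq : Continuous fun r => g (q - r) := hg.comp (continuous_const.sub continuous_id)
    have hgp : Continuous fun r => g (p - r) := hg.comp (continuous_const.sub continuous_id)
    have i1 : IntervalIntegrable (fun r => k r • g (q - r)) volume 0 p :=
      II_smul_cont (kII hk le_rfl hp) hgq
    have i2 : IntervalIntegrable (fun r => k r • g (q - r)) volume p q :=
      II_smul_cont (kII hk hp hq) hgq
    have i3 : IntervalIntegrable (fun r => k r • g (p - r)) volume 0 p :=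
      II_smul_cont (kII hk le_rfl hp) hgp
    have hsplit : (∫ r in (0:ℝ)..q, k r • g (q - r))
        = (∫ r in (0:ℝ)..p, k r • g (q - r)) + ∫ r in p..q, k r • g (q - r) :=
      (intervalIntegral.integral_add_adjacent_intervals i1 i2).symm
    rw [dist_eq_norm, hsplit]
    have hre : (∫ r in (0:ℝ)..p, k r • g (q - r)) + (∫ r in p..q, k r • g (q - r))
        - (∫ r in (0:ℝ)..p, k r • g (p - r))
        = (∫ r in (0:ℝ)..p, (k r • g (q - r) - k r • g (p - r)))
          + ∫ r in p..q, k r • g (q - r) := by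
      rw [intervalIntegral.integral_sub i1 i3]; abel
    rw [hre]
    refine (norm_add_le _ _).trans (add_le_add ?_ ?_)
    · refine (intervalIntegral.norm_integral_le_integral_norm hp).trans ?_
      have hmono : (∫ r in (0:ℝ)..p, ‖k r • g (q - r) - k r • g (p - r)‖)
          ≤ ∫ r in (0:ℝ)..p, |k r| * (ε / (2 * (KK T + 1))) := by
        refine intervalIntegral.integral_mono_on hp (i1.sub i3).norm
          ((kIIabs hk le_rfl hp).mul_const _) ?_
        intro r hr
        rw [← smul_sub, norm_smul, Real.norm_eq_abs]
        refine mul_le_mul_of_nonneg_left ?_ (abs_nonneg _)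
        have h1 : q - r ∈ Icc (0:ℝ) T := ⟨by linarith [hr.2], by linarith [hr.1]⟩
        have h2 : p - r ∈ Icc (0:ℝ) T := ⟨by linarith [hr.2], by linarith [hr.1]⟩
        have hdd : dist (q - r) (p - r) < δ₁ := by
          rw [Real.dist_eq]; rw [Real.dist_eq] at hd
          simpa [sub_sub_sub_cancel_right] using hd
        have := hgu _ h1 _ h2 hdd
        rw [dist_eq_norm] at this
        exact this.le
      refine hmono.trans ?_
      rw [intervalIntegral.integral_mul_const, hKK]
      rw [mul_comm]
      exact mul_le_mul_of_nonneg_left (hKmono p T hp (by linarith)) (by positivity)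
    · refine (intervalIntegral.norm_integral_le_integral_norm hpq).trans ?_
      have hmono : (∫ r in p..q, ‖k r • g (q - r)‖) ≤ ∫ r in p..q, |k r| * C := by
        refine intervalIntegral.integral_mono_on hpq i2.norm
          ((kIIabs hk hp hq).mul_const _) ?_
        intro r hr
        rw [norm_smul, Real.norm_eq_abs]
        refine mul_le_mul_of_nonneg_left (hC _ ⟨by linarith [hr.2], by linarith [hr.1]⟩)
          (abs_nonneg _)
      refine hmono.trans ?_
      rw [intervalIntegral.integral_mul_const, ← hKadd p q hp hq, mul_comm]
  -- conclude
  have hbound1 : ε / (2 * (KK T + 1)) * KK T ≤ ε / 2 := by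
    rw [div_mul_eq_mul_div, div_le_div_iff₀ (by positivity) (by norm_num)]
    nlinarith [hKT0, hε.le]
  have hK2t := hK2 htI hd2
  rw [Real.dist_eq] at hK2t
  rcases le_total t t₀ with hle | hle
  · have h := est t t₀ ht' hle (by linarith) (by rwa [dist_comm] at hd1)
    rw [dist_comm]
    refine lt_of_le_of_lt h ?_
    have hb2 : KK t₀ - KK t ≤ |KK t - KK t₀| := by
      rw [abs_sub_comm]; exact le_abs_self _
    have : C * (KK t₀ - KK t) ≤ C * (ε / (2 * (C + 1))) :=
      mul_le_mul_of_nonneg_left (hb2.trans hK2t.le) hC0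
    have hb3 : C * (ε / (2 * (C + 1))) < ε / 2 := by
      have hd0 : 0 < ε / (2 * (C + 1)) := by positivity
      have hmul : ε / (2 * (C + 1)) * (2 * (C + 1)) = ε := div_mul_cancel₀ _ (by positivity)
      nlinarith [hd0, hmul, hC0]
    linarith
  · have h := est t₀ t ht₀' hle htT hd1
    refine lt_of_le_of_lt h ?_
    have hb2 : KK t - KK t₀ ≤ |KK t - KK t₀| := le_abs_self _
    have : C * (KK t - KK t₀) ≤ C * (ε / (2 * (C + 1))) :=
      mul_le_mul_of_nonneg_left (hb2.trans hK2t.le) hC0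
    have hb3 : C * (ε / (2 * (C + 1))) < ε / 2 := by
      have hd0 : 0 < ε / (2 * (C + 1)) := by positivity
      have hmul : ε / (2 * (C + 1)) * (2 * (C + 1)) = ε := div_mul_cancel₀ _ (by positivity)
      nlinarith [hd0, hmul, hC0]
    linarith

end helpers


set_option maxHeartbeats 1000000 in
theorem stmt_13 {H : Type*} [NormedAddCommGroup H] [InnerProductSpace ℝ H]
    [FiniteDimensional ℝ H]
    (A D : H →ₗ[ℝ] H) (ν : ℝ) (hν : 0 < ν)
    (hA_sym : ∀ x y : H, ⟪A x, y⟫ = ⟪x, A y⟫)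
    (hA_pos : ∀ x : H, ν * ‖x‖ ^ 2 ≤ ⟪A x, x⟫)
    (hD_sym : ∀ x y : H, ⟪D x, y⟫ = ⟪x, D y⟫)
    (hD_pos : ∀ x : H, x ≠ 0 → 0 < ⟪D x, x⟫)
    (hDA_comm : ∀ x : H, D (A x) = A (D x))
    (k : ℝ → ℝ)
    (hk_int : MeasureTheory.LocallyIntegrableOn k (Set.Ici (0 : ℝ)))
    (hk_pos : ∀ T : ℝ, 0 < T → ∀ ψ : ℝ → ℝ, ContinuousOn ψ (Set.Icc 0 T) →
      0 ≤ ∫ t in (0 : ℝ)..T, ψ t * ∫ s in (0 : ℝ)..t, k (t - s) * ψ s)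
    (u φ : ℝ → H) (u₀ : H) (hφ : Continuous φ) (hu_cont : Continuous u)
    (hu : ∀ t, 0 ≤ t →
      HasDerivAt u (φ t - ∫ s in (0 : ℝ)..t, k (t - s) • A (u s)) t)
    (hu0 : u 0 = u₀) :
    ∀ t, 0 ≤ t →
      Real.sqrt ⟪D (u t), u t⟫
        ≤ Real.sqrt ⟪D u₀, u₀⟫ + ∫ s in (0 : ℝ)..t, Real.sqrt ⟪D (φ s), φ s⟫ := by
  classical
  have hA_cont : Continuous A := A.continuous_of_finiteDimensional
  have hD_cont : Continuous D := D.continuous_of_finiteDimensional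
  have hDnn : ∀ x : H, 0 ≤ ⟪D x, x⟫ := by
    intro x
    rcases eq_or_ne x 0 with h | h
    · simp [h]
    · exact (hD_pos x h).le
  have hAnn : ∀ x : H, 0 ≤ ⟪A x, x⟫ := fun x => le_trans (by positivity) (hA_pos x)
  -- Cauchy–Schwarz for the D-form
  have csD : ∀ x y : H, ⟪D x, y⟫ ≤ Real.sqrt ⟪D x, x⟫ * Real.sqrt ⟪D y, y⟫ := by
    intro x y
    have hsym : ⟪D y, x⟫ = ⟪D x, y⟫ := by rw [hD_sym y x, real_inner_comm]
    rcases eq_or_ne y 0 with hy | hy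
    · simp [hy]
    · have hq : 0 < ⟪D y, y⟫ := hD_pos y hy
      have hexp : ⟪D ((⟪D y, y⟫ : ℝ) • x - (⟪D x, y⟫ : ℝ) • y),
          (⟪D y, y⟫ : ℝ) • x - (⟪D x, y⟫ : ℝ) • y⟫
          = ⟪D y, y⟫ * (⟪D y, y⟫ * ⟪D x, x⟫ - ⟪D x, y⟫ * ⟪D x, y⟫) := by
        simp only [map_sub, _root_.map_smul, inner_sub_left, inner_sub_right,
          real_inner_smul_left, real_inner_smul_right]
        rw [hsym]; ring
      have h0 := hDnn ((⟪D y, y⟫ : ℝ) • x - (⟪D x, y⟫ : ℝ) • y)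
      rw [hexp] at h0
      have hr2 : ⟪D x, y⟫ * ⟪D x, y⟫ ≤ ⟪D x, x⟫ * ⟪D y, y⟫ := by nlinarith [hq]
      calc ⟪D x, y⟫ ≤ |⟪D x, y⟫| := le_abs_self _
        _ = Real.sqrt (⟪D x, y⟫ * ⟪D x, y⟫) := (Real.sqrt_mul_self_eq_abs _).symm
        _ ≤ Real.sqrt (⟪D x, x⟫ * ⟪D y, y⟫) := Real.sqrt_le_sqrt hr2
        _ = _ := Real.sqrt_mul (hDnn x) _
  -- spectral decomposition of B = D ∘ A
  set B : H →ₗ[ℝ] H := D ∘ₗ A with hB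
  have hB_symm : B.IsSymmetric := by
    intro x y
    calc ⟪D (A x), y⟫ = ⟪A x, D y⟫ := hD_sym _ _
      _ = ⟪x, A (D y)⟫ := hA_sym _ _
      _ = ⟪x, D (A y)⟫ := by rw [hDA_comm]
      _ = ⟪x, B y⟫ := rfl
  have hn : Module.finrank ℝ H = Module.finrank ℝ H := rfl
  set e := hB_symm.eigenvectorBasis hn with he
  set μ := hB_symm.eigenvalues hn with hμdef
  have hBe : ∀ i, B (e i) = μ i • e i := fun i =>
    (hB_symm.hasEigenvector_eigenvectorBasis hn i).apply_eq_smul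
  have hμ : ∀ i, 0 ≤ μ i := by
    intro i
    have hvne : e i ≠ 0 := (hB_symm.hasEigenvector_eigenvectorBasis hn i).2
    have h1 : A (D (e i)) = μ i • e i := by rw [← hDA_comm]; exact hBe i
    have h2 : ⟪A (D (e i)), D (e i)⟫ = μ i * ⟪D (e i), e i⟫ := by
      rw [h1, real_inner_smul_left, real_inner_comm]
    have h3 : 0 ≤ ⟪A (D (e i)), D (e i)⟫ := hAnn _
    have h4 : 0 < ⟪D (e i), e i⟫ := hD_pos _ hvne
    nlinarith [h2, h3, h4]
  have decomp : ∀ x y : H, ⟪B x, y⟫ = ∑ i, μ i * (⟪x, e i⟫ * ⟪y, e i⟫) := by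
    intro x y
    have hx : B x = ∑ i, (⟪e i, x⟫ * μ i) • e i := by
      conv_lhs => rw [← e.sum_repr' x]
      rw [map_sum]
      exact Finset.sum_congr rfl fun i _ => by rw [_root_.map_smul, hBe i, smul_smul]
    rw [hx, sum_inner]
    refine Finset.sum_congr rfl fun i _ => ?_
    rw [real_inner_smul_left, real_inner_comm (e i) x, real_inner_comm (e i) y]
    ring
  -- component functions
  have hψcont : ∀ i : Fin (Module.finrank ℝ H), Continuous fun t => ⟪u t, e i⟫ :=
    fun i => hu_cont.inner continuous_const
  -- the memory term
  set c : ℝ → H := fun t => ∫ s in (0:ℝ)..t, k (t - s) • A (u s) with hc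
  have hccont : ContinuousOn c (Ici 0) := conv_continuousOn hk_int (hA_cont.comp hu_cont)
  have hcint : ∀ t : ℝ, 0 ≤ t → IntervalIntegrable (fun s => k (t - s) • A (u s)) volume 0 t :=
    fun t ht => conv_II hk_int (hA_cont.comp hu_cont) ht
  -- positivity of the memory integral
  have hP : ∀ T, 0 ≤ T → 0 ≤ ∫ t in (0:ℝ)..T, ⟪D (u t), c t⟫ := by
    intro T hT
    have hsub : uIcc (0:ℝ) T ⊆ Ici 0 := by rw [uIcc_of_le hT]; exact fun x hx => hx.1
    have hconvcont : ∀ i : Fin (Module.finrank ℝ H),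
        ContinuousOn (fun t => ∫ s in (0:ℝ)..t, k (t - s) * ⟪u s, e i⟫) (Ici 0) := by
      intro i
      have := conv_continuousOn (E := ℝ) hk_int (hψcont i)
      simpa [smul_eq_mul] using this
    have hpt : ∀ t ∈ uIcc (0:ℝ) T, ⟪D (u t), c t⟫
        = ∑ i, μ i * (⟪u t, e i⟫ * ∫ s in (0:ℝ)..t, k (t - s) * ⟪u s, e i⟫) := by
      intro t htm
      have ht : 0 ≤ t := hsub htm
      have hint := hcint t ht
      have h1 : ⟪D (u t), c t⟫ = ∫ s in (0:ℝ)..t, k (t - s) * ⟪D (u t), A (u s)⟫ := by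
        have h := (innerSL ℝ (D (u t))).intervalIntegral_comp_comm hint
        simpa [hc] using h.symm
      rw [h1]
      have h2 : ∀ s : ℝ, k (t - s) * ⟪D (u t), A (u s)⟫
          = ∑ i, μ i * (⟪u t, e i⟫ * (k (t - s) * ⟪u s, e i⟫)) := by
        intro s
        have hBx : ⟪D (u t), A (u s)⟫ = ⟪B (u s), u t⟫ := by
          rw [hD_sym, real_inner_comm]; rfl
        rw [hBx, decomp, Finset.mul_sum]
        refine Finset.sum_congr rfl fun i _ => ?_
        ring
      rw [intervalIntegral.integral_congr
        (g := fun s => ∑ i, μ i * (⟪u t, e i⟫ * (k (t - s) * ⟪u s, e i⟫))) (fun s _ => h2 s)]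
      rw [intervalIntegral.integral_finset_sum]
      · exact Finset.sum_congr rfl fun i _ => by
          rw [intervalIntegral.integral_const_mul, intervalIntegral.integral_const_mul]
      · intro i _
        have base : IntervalIntegrable (fun s => k (t - s) * ⟪u s, e i⟫) volume 0 t := by
          simpa [smul_eq_mul] using conv_II (E := ℝ) hk_int (hψcont i) ht
        exact (base.const_mul _).const_mul _
    rw [intervalIntegral.integral_congr hpt, intervalIntegral.integral_finset_sum]
    · refine Finset.sum_nonneg fun i _ => ?_
      rw [intervalIntegral.integral_const_mul]
      refine mul_nonneg (hμ i) ?_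
      rcases eq_or_lt_of_le hT with h0 | h0
      · rw [← h0]; simp
      · exact hk_pos T h0 _ (hψcont i).continuousOn
    · intro i _
      refine ContinuousOn.intervalIntegrable ?_
      exact continuousOn_const.mul ((hψcont i).continuousOn.mul ((hconvcont i).mono hsub))
  -- energy functional
  set F : ℝ → ℝ := fun t => ⟪D (u t), u t⟫ with hFdef
  set aa : ℝ → ℝ := fun t => Real.sqrt ⟪D (φ t), φ t⟫ with hadef
  set vv : ℝ → ℝ := fun t => Real.sqrt (F t) with hvdef
  have hFcont : Continuous F := (hD_cont.comp hu_cont).inner hu_cont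
  have hvcont : Continuous vv := Real.continuous_sqrt.comp hFcont
  have hacont : Continuous aa := Real.continuous_sqrt.comp ((hD_cont.comp hφ).inner hφ)
  have hann : ∀ t, 0 ≤ aa t := fun t => Real.sqrt_nonneg _
  have hvnn : ∀ t, 0 ≤ vv t := fun t => Real.sqrt_nonneg _
  have hvsq : ∀ t, vv t ^ 2 = F t := fun t => Real.sq_sqrt (hDnn _)
  -- derivative of the energy
  have hFd : ∀ t, 0 ≤ t → HasDerivAt F (2 * ⟪D (u t), φ t - c t⟫) t := by
    intro t ht
    have hu' : HasDerivAt u (φ t - c t) t := hu t ht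
    have hDu : HasDerivAt (fun s : ℝ => D (u s)) (D (φ t - c t)) t := by
      have h := D.toContinuousLinearMap.hasFDerivAt.comp_hasDerivAt t hu'
      simpa [Function.comp_def] using h
    have h := hDu.inner ℝ hu'
    have h2 : (2:ℝ) * ⟪D (u t), φ t - c t⟫
        = ⟪D (u t), φ t - c t⟫ + ⟪D (φ t - c t), u t⟫ := by
      have : ⟪D (φ t - c t), u t⟫ = ⟪D (u t), φ t - c t⟫ := by
        rw [hD_sym, real_inner_comm]
      rw [this]; ring
    rw [hFdef, h2]
    exact h
  -- energy inequality
  have hE : ∀ T, 0 ≤ T → F T ≤ F 0 + 2 * ∫ t in (0:ℝ)..T, aa t * vv t := by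
    intro T hT
    have hIcc : uIcc (0:ℝ) T = Icc 0 T := uIcc_of_le hT
    have hsub : uIcc (0:ℝ) T ⊆ Ici 0 := by rw [hIcc]; exact fun x hx => hx.1
    have hcT : ContinuousOn c (uIcc 0 T) := hccont.mono hsub
    have hint1 : IntervalIntegrable (fun t => ⟪D (u t), c t⟫) volume 0 T :=
      (((hD_cont.comp hu_cont).continuousOn).inner hcT).intervalIntegrable
    have hint2 : IntervalIntegrable (fun t => ⟪D (u t), φ t⟫) volume 0 T :=
      ((hD_cont.comp hu_cont).inner hφ).intervalIntegrable 0 T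
    have hftc : ∫ t in (0:ℝ)..T, 2 * ⟪D (u t), φ t - c t⟫ = F T - F 0 := by
      refine intervalIntegral.integral_eq_sub_of_hasDerivAt (fun t htm => hFd t (hsub htm)) ?_
      refine ContinuousOn.intervalIntegrable ?_
      refine continuousOn_const.mul ?_
      exact ((hD_cont.comp hu_cont).continuousOn).inner (hφ.continuousOn.sub hcT)
    have hsplitint : ∫ t in (0:ℝ)..T, 2 * ⟪D (u t), φ t - c t⟫
        = 2 * (∫ t in (0:ℝ)..T, ⟪D (u t), φ t⟫) - 2 * ∫ t in (0:ℝ)..T, ⟪D (u t), c t⟫ := by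
      have hpt : ∀ t : ℝ, 2 * ⟪D (u t), φ t - c t⟫
          = 2 * ⟪D (u t), φ t⟫ - 2 * ⟪D (u t), c t⟫ := by
        intro t; rw [inner_sub_right]; ring
      rw [intervalIntegral.integral_congr
        (g := fun t => 2 * ⟪D (u t), φ t⟫ - 2 * ⟪D (u t), c t⟫) (fun t _ => hpt t)]
      rw [intervalIntegral.integral_sub (hint2.const_mul 2) (hint1.const_mul 2),
        intervalIntegral.integral_const_mul, intervalIntegral.integral_const_mul]
    have hCS : (∫ t in (0:ℝ)..T, ⟪D (u t), φ t⟫) ≤ ∫ t in (0:ℝ)..T, aa t * vv t := by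
      refine intervalIntegral.integral_mono_on hT hint2
        ((hacont.mul hvcont).intervalIntegrable 0 T) ?_
      intro t _
      have h1 : ⟪D (u t), φ t⟫ = ⟪D (φ t), u t⟫ := by rw [hD_sym, real_inner_comm]
      rw [h1]
      exact csD (φ t) (u t)
    have hPT := hP T hT
    rw [hsplitint] at hftc
    linarith
  -- Grönwall argument
  intro T₀ hT₀
  have hgoal : vv T₀ ≤ vv 0 + ∫ s in (0:ℝ)..T₀, aa s := by
    refine le_of_forall_pos_le_add ?_
    intro ε hε
    set w : ℝ → ℝ := fun t => vv 0 + ε + ∫ s in (0:ℝ)..t, aa s with hwdef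
    have hw_cont : Continuous w := continuous_const.add
      (intervalIntegral.continuous_primitive (fun a b => hacont.intervalIntegrable a b) 0)
    have hw0 : w 0 = vv 0 + ε := by simp [hwdef]
    have claim : ∀ t ∈ Icc (0:ℝ) T₀, vv t < w t := by
      by_contra hcon
      push_neg at hcon
      obtain ⟨t₁, ht₁, hwt₁⟩ := hcon
      set S : Set ℝ := Icc 0 T₀ ∩ {t | w t ≤ vv t} with hSdef
      have hSne : S.Nonempty := ⟨t₁, ht₁, hwt₁⟩
      have hScl : IsClosed S := isClosed_Icc.inter (isClosed_le hw_cont hvcont)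
      have hSbdd : BddBelow S := ⟨0, fun x hx => hx.1.1⟩
      set m := sInf S with hm
      have hmS : m ∈ S := hScl.csInf_mem hSne hSbdd
      have hm0 : 0 ≤ m := hmS.1.1
      have hmT : m ≤ T₀ := hmS.1.2
      have hwm : w m ≤ vv m := hmS.2
      have hv0 : vv 0 < w 0 := by rw [hw0]; linarith
      have hlt : ∀ s, 0 ≤ s → s < m → vv s < w s := by
        intro s hs hsm
        by_contra hns
        push_neg at hns
        exact absurd (csInf_le hSbdd ⟨⟨hs, hsm.le.trans hmT⟩, hns⟩) (not_le.mpr hsm)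
      have hintcomp : (∫ s in (0:ℝ)..m, aa s * vv s) ≤ ∫ s in (0:ℝ)..m, aa s * w s := by
        refine intervalIntegral.integral_mono_ae_restrict hm0
          ((hacont.mul hvcont).intervalIntegrable _ _)
          ((hacont.mul hw_cont).intervalIntegrable _ _) ?_
        have hsing : ∀ᵐ s ∂(volume.restrict (Icc (0:ℝ) m)), s ≠ m := by
          refine ae_iff.mpr ?_
          have hset : {x : ℝ | ¬ x ≠ m} = {m} := by ext x; simp
          rw [hset, Measure.restrict_apply (measurableSet_singleton m)]
          exact measure_mono_null inter_subset_left Real.volume_singleton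
        filter_upwards [hsing, ae_restrict_mem measurableSet_Icc] with s hs hsm'
        have hsm : s < m := lt_of_le_of_ne hsm'.2 hs
        exact mul_le_mul_of_nonneg_left (hlt s hsm'.1 hsm).le (hann s)
      have hWid : w m ^ 2 = w 0 ^ 2 + 2 * ∫ s in (0:ℝ)..m, aa s * w s := by
        have hwd : ∀ s : ℝ, HasDerivAt w (aa s) s := by
          intro s
          have h := intervalIntegral.integral_hasDerivAt_right
            (hacont.intervalIntegrable 0 s)
            hacont.stronglyMeasurable.stronglyMeasurableAtFilter
            hacont.continuousAt
          exact h.const_add _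
        have hWd : ∀ s : ℝ, HasDerivAt (fun x => w x ^ 2) (2 * (aa s * w s)) s := by
          intro s
          have h : HasDerivAt (fun x => w x ^ 2) (((2:ℕ):ℝ) * w s ^ (2 - 1) * aa s) s :=
            (hwd s).fun_pow 2
          convert h using 1
          simp only [pow_one, Nat.cast_ofNat]
          ring
        have hftcW := intervalIntegral.integral_eq_sub_of_hasDerivAt
          (f := fun x => w x ^ 2) (fun s _ => hWd s)
          (Continuous.intervalIntegrable (continuous_const.mul (hacont.mul hw_cont)) 0 m)
        rw [intervalIntegral.integral_const_mul] at hftcW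
        beta_reduce at hftcW
        linarith
      have hFm : vv m ^ 2 ≤ vv 0 ^ 2 + 2 * ∫ s in (0:ℝ)..m, aa s * vv s := by
        have h := hE m hm0
        rw [← hvsq m, ← hvsq 0] at h
        linarith
      have hv0w0 : vv 0 ^ 2 < w 0 ^ 2 := by rw [hw0]; nlinarith [hvnn 0]
      have hwmnn : 0 ≤ w m := by
        have h : 0 ≤ ∫ s in (0:ℝ)..m, aa s :=
          intervalIntegral.integral_nonneg hm0 fun s _ => hann s
        have : w m = vv 0 + ε + ∫ s in (0:ℝ)..m, aa s := rfl
        rw [this]; linarith [hvnn 0]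
      nlinarith [hwm, hintcomp, hWid, hFm, hv0w0, hwmnn]
    have hfin := claim T₀ ⟨hT₀, le_rfl⟩
    have hwT : w T₀ = vv 0 + ε + ∫ s in (0:ℝ)..T₀, aa s := rfl
    rw [hwT] at hfin
    linarith only [hfin]
  have hv0eq : vv 0 = Real.sqrt ⟪D u₀, u₀⟫ := by rw [hvdef]; simp [hFdef, hu0]
  calc Real.sqrt ⟪D (u T₀), u T₀⟫ = vv T₀ := rfl
    _ ≤ vv 0 + ∫ s in (0:ℝ)..T₀, aa s := hgoal
    _ = _ := by rw [hv0eq]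
end

section
/- Let H be a finite-dimensional real inner product space, B = B* ≥ δ I with δ > 0, C with ⟪Cx,x⟫ ≥ 0, A = A* with ⟪Ax,x⟫ ≥ 0, a_i > 0, b_i ≥ 0. If (v, v₁,…,v_m) is a C¹ solution of B dv/dt + Σ_i a_i A v_i + C v = φ(t), dv_i/dt + b_i v_i − v = 0, with v(0) = u₀, v_i(0) = 0, then (‖v(t)‖_B² + Σ_i a_i ‖v_i(t)‖_A²)^{1/2} ≤ ‖u₀‖_B + ∫_0^t ‖φ(s)‖_{B⁻¹} ds for all t ≥ 0. -/
open scoped RealInnerProductSpace BigOperators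

private lemma cs_aux {H : Type*} [NormedAddCommGroup H] [InnerProductSpace ℝ H]
    (B : H →ₗ[ℝ] H) (hsym : ∀ x y : H, ⟪B x, y⟫ = ⟪x, B y⟫)
    (hpos : ∀ x : H, (0:ℝ) ≤ ⟪B x, x⟫) (x y : H) :
    ⟪B x, y⟫ ≤ Real.sqrt ⟪B x, x⟫ * Real.sqrt ⟪B y, y⟫ := by
  have key : ∀ t : ℝ, 0 ≤ ⟪B y, y⟫ * (t * t) + (2 * ⟪B x, y⟫) * t + ⟪B x, x⟫ := by
    intro t
    have h0 := hpos (x + t • y)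
    have hBy : ⟪B y, x⟫ = ⟪B x, y⟫ := by rw [hsym]; exact real_inner_comm _ _
    have hexp : ⟪B (x + t • y), x + t • y⟫
        = ⟪B y, y⟫ * (t * t) + (2 * ⟪B x, y⟫) * t + ⟪B x, x⟫ := by
      simp only [map_add, map_smul, inner_add_left, inner_add_right,
        real_inner_smul_left, real_inner_smul_right, smul_eq_mul, hBy]
      ring
    linarith [hexp ▸ h0]
  have hd := discrim_le_zero key
  rw [discrim] at hd
  have h2 : ⟪B x, y⟫ ^ 2 ≤ ⟪B x, x⟫ * ⟪B y, y⟫ := by nlinarith [hd]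
  calc ⟪B x, y⟫ ≤ |⟪B x, y⟫| := le_abs_self _
    _ = Real.sqrt (⟪B x, y⟫ ^ 2) := (Real.sqrt_sq_eq_abs _).symm
    _ ≤ Real.sqrt (⟪B x, x⟫ * ⟪B y, y⟫) := Real.sqrt_le_sqrt h2
    _ = _ := Real.sqrt_mul (hpos x) _

theorem stmt_18 {H : Type*} [NormedAddCommGroup H] [InnerProductSpace ℝ H]
    [FiniteDimensional ℝ H]
    (m : ℕ) (hm : 1 ≤ m) (A B Binv C : H →ₗ[ℝ] H) (δ : ℝ) (hδ : 0 < δ)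
    (hB_sym : ∀ x y : H, ⟪B x, y⟫ = ⟪x, B y⟫)
    (hB_pos : ∀ x : H, δ * ‖x‖ ^ 2 ≤ ⟪B x, x⟫)
    (hBinv : ∀ x : H, Binv (B x) = x ∧ B (Binv x) = x)
    (hC_nonneg : ∀ x : H, 0 ≤ ⟪C x, x⟫)
    (hA_sym : ∀ x y : H, ⟪A x, y⟫ = ⟪x, A y⟫)
    (hA_nonneg : ∀ x : H, 0 ≤ ⟪A x, x⟫)
    (a b : Fin m → ℝ) (ha : ∀ i, 0 < a i) (hb : ∀ i, 0 ≤ b i)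
    (v v' : ℝ → H) (vi : Fin m → ℝ → H) (φ : ℝ → H) (u₀ : H)
    (hφ : Continuous φ) (hv'_cont : Continuous v')
    (hv_deriv : ∀ t, 0 ≤ t → HasDerivAt v (v' t) t)
    (heq : ∀ t, 0 ≤ t →
      B (v' t) + ∑ i, a i • A (vi i t) + C (v t) = φ t)
    (hvi : ∀ i, ∀ t, 0 ≤ t → HasDerivAt (vi i) (v t - b i • vi i t) t)
    (hv0 : v 0 = u₀) (hvi0 : ∀ i, vi i 0 = 0) :
    ∀ t, 0 ≤ t →
      Real.sqrt (⟪B (v t), v t⟫ + ∑ i, a i * ⟪A (vi i t), vi i t⟫)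
        ≤ Real.sqrt ⟪B u₀, u₀⟫
          + ∫ s in (0 : ℝ)..t, Real.sqrt ⟪Binv (φ s), φ s⟫ := by
  have hBpos0 : ∀ x : H, (0:ℝ) ≤ ⟪B x, x⟫ := fun x =>
    le_trans (by positivity) (hB_pos x)
  set ψ : ℝ → ℝ := fun s => Real.sqrt ⟪Binv (φ s), φ s⟫ with hψdef
  have hψcont : Continuous ψ :=
    Real.continuous_sqrt.comp ((Binv.continuous_of_finiteDimensional.comp hφ).inner hφ)
  set Φ : ℝ → ℝ := fun t => ∫ s in (0:ℝ)..t, ψ s with hΦdef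
  have hΦderiv : ∀ x : ℝ, HasDerivAt Φ (ψ x) x := fun x =>
    (hψcont.integral_hasStrictDerivAt 0 x).hasDerivAt
  set E : ℝ → ℝ := fun s => ⟪B (v s), v s⟫ + ∑ i, a i * ⟪A (vi i s), vi i s⟫ with hEdef
  have hsum_nonneg : ∀ s, (0:ℝ) ≤ ∑ i, a i * ⟪A (vi i s), vi i s⟫ := fun s =>
    Finset.sum_nonneg fun i _ => mul_nonneg (ha i).le (hA_nonneg _)
  have hE_nonneg : ∀ s, 0 ≤ E s := fun s => add_nonneg (hBpos0 _) (hsum_nonneg s)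
  have hBvv_le : ∀ s, ⟪B (v s), v s⟫ ≤ E s := fun s =>
    le_add_of_nonneg_right (hsum_nonneg s)
  -- derivative of E
  set D : ℝ → ℝ := fun s =>
    2*⟪φ s, v s⟫ - 2*⟪C (v s), v s⟫ - ∑ i, 2 * (a i * (b i * ⟪A (vi i s), vi i s⟫)) with hDdef
  have hE' : ∀ s, 0 ≤ s → HasDerivAt E (D s) s := by
    intro s hs
    have hv := hv_deriv s hs
    have hBv : HasDerivAt (fun u => B (v u)) (B (v' s)) s := by
      simpa [Function.comp_def] using B.toContinuousLinearMap.hasFDerivAt.comp_hasDerivAt s hv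
    have h1 : HasDerivAt (fun u => ⟪B (v u), v u⟫)
        (⟪B (v s), v' s⟫ + ⟪B (v' s), v s⟫) s := hBv.inner ℝ hv
    have h2 : ∀ i : Fin m, HasDerivAt (fun u => a i * ⟪A (vi i u), vi i u⟫)
        (a i * (⟪A (vi i s), v s - b i • vi i s⟫
          + ⟪A (v s - b i • vi i s), vi i s⟫)) s := by
      intro i
      have hvii := hvi i s hs
      have hAv : HasDerivAt (fun u => A (vi i u)) (A (v s - b i • vi i s)) s := by
        simpa [Function.comp_def] using A.toContinuousLinearMap.hasFDerivAt.comp_hasDerivAt s hvii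
      exact (hAv.inner ℝ hvii).const_mul (a i)
    have hsum : HasDerivAt (fun u => ∑ i, a i * ⟪A (vi i u), vi i u⟫)
        (∑ i, a i * (⟪A (vi i s), v s - b i • vi i s⟫
          + ⟪A (v s - b i • vi i s), vi i s⟫)) s :=
      HasDerivAt.fun_sum (fun i _ => h2 i)
    have hE1 := h1.add hsum
    convert hE1 using 1
    case e'_4 => rfl
    case e'_5 => rfl
    case e'_8 => rfl
    -- algebraic identification of derivatives
    have hBsym1 : ⟪B (v s), v' s⟫ = ⟪B (v' s), v s⟫ := by
      rw [hB_sym]; exact real_inner_comm _ _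
    have hBv'eq : B (v' s) = φ s - ∑ i, a i • A (vi i s) - C (v s) := by
      have := heq s hs; rw [← this]; abel
    have hBv'v : ⟪B (v' s), v s⟫
        = ⟪φ s, v s⟫ - (∑ i, a i * ⟪A (vi i s), v s⟫) - ⟪C (v s), v s⟫ := by
      rw [hBv'eq]
      simp [inner_sub_left, sum_inner, real_inner_smul_left]
    have hterm : ∀ i : Fin m,
        a i * (⟪A (vi i s), v s - b i • vi i s⟫ + ⟪A (v s - b i • vi i s), vi i s⟫)
        = 2 * (a i * ⟪A (vi i s), v s⟫) - 2 * (a i * (b i * ⟪A (vi i s), vi i s⟫)) := by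
      intro i
      have hAvv : ⟪A (v s), vi i s⟫ = ⟪A (vi i s), v s⟫ := by
        rw [hA_sym]; exact real_inner_comm _ _
      simp only [map_sub, map_smul, inner_sub_left, inner_sub_right,
        real_inner_smul_left, real_inner_smul_right, smul_eq_mul, hAvv]
      ring
    rw [hBv'v]
    simp only [hDdef]
    rw [Finset.sum_congr rfl (fun i _ => hterm i), Finset.sum_sub_distrib,
      ← Finset.mul_sum, ← Finset.mul_sum, hBsym1, hBv'v]
    ring
  -- bound on D
  have hD_le : ∀ s, 0 ≤ s → ∀ ε : ℝ, 0 < ε → D s ≤ 2 * ψ s * Real.sqrt (E s + ε) := by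
    intro s hs ε hε
    have hphiv : ⟪φ s, v s⟫ ≤ ψ s * Real.sqrt ⟪B (v s), v s⟫ := by
      have h1 : ⟪φ s, v s⟫ = ⟪B (Binv (φ s)), v s⟫ := by rw [(hBinv (φ s)).2]
      have h2 := cs_aux B hB_sym hBpos0 (Binv (φ s)) (v s)
      have h3 : ⟪B (Binv (φ s)), Binv (φ s)⟫ = ⟪Binv (φ s), φ s⟫ := by
        rw [(hBinv (φ s)).2]; exact real_inner_comm _ _
      rw [h1]; rw [h3] at h2; exact h2
    have hsq : Real.sqrt ⟪B (v s), v s⟫ ≤ Real.sqrt (E s + ε) :=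
      Real.sqrt_le_sqrt (le_trans (hBvv_le s) (by linarith))
    have hψnn : 0 ≤ ψ s := Real.sqrt_nonneg _
    have h4 : ⟪φ s, v s⟫ ≤ ψ s * Real.sqrt (E s + ε) :=
      le_trans hphiv (mul_le_mul_of_nonneg_left hsq hψnn)
    have h5 : (0:ℝ) ≤ ∑ i, 2 * (a i * (b i * ⟪A (vi i s), vi i s⟫)) :=
      Finset.sum_nonneg fun i _ => mul_nonneg (by norm_num)
        (mul_nonneg (ha i).le (mul_nonneg (hb i) (hA_nonneg _)))
    have h6 := hC_nonneg (v s)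
    simp only [hDdef]
    nlinarith
  -- main epsilon estimate
  have main : ∀ ε : ℝ, 0 < ε → ∀ t, 0 ≤ t →
      Real.sqrt (E t + ε) ≤ Real.sqrt (E 0 + ε) + Φ t := by
    intro ε hε t ht
    set G : ℝ → ℝ := fun s => Real.sqrt (E s + ε) with hGdef
    have hEε : ∀ s, 0 < E s + ε := fun s => by linarith [hE_nonneg s]
    have hG' : ∀ s, 0 ≤ s → HasDerivAt G (D s / (2 * Real.sqrt (E s + ε))) s :=
      fun s hs => ((hE' s hs).add_const ε).sqrt (hEε s).ne'
    set h : ℝ → ℝ := fun s => Real.sqrt (E 0 + ε) + Φ s - G s with hhdef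
    have hh : ∀ s, 0 ≤ s → HasDerivAt h (ψ s - D s / (2 * Real.sqrt (E s + ε))) s :=
      fun s hs => ((hΦderiv s).const_add _).sub (hG' s hs)
    have hh_nonneg : ∀ s, 0 ≤ s → 0 ≤ ψ s - D s / (2 * Real.sqrt (E s + ε)) := by
      intro s hs
      have hpos : 0 < 2 * Real.sqrt (E s + ε) := by
        have := Real.sqrt_pos.mpr (hEε s); linarith
      have hd := hD_le s hs ε hε
      rw [sub_nonneg, div_le_iff₀ hpos]
      linarith
    have hmono : MonotoneOn h (Set.Ici 0) := by
      apply monotoneOn_of_deriv_nonneg (convex_Ici 0)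
      · intro s hs; exact (hh s hs).continuousAt.continuousWithinAt
      · intro s hs
        rw [interior_Ici] at hs
        exact (hh s (le_of_lt hs)).differentiableAt.differentiableWithinAt
      · intro s hs
        rw [interior_Ici] at hs
        rw [(hh s (le_of_lt hs)).deriv]
        exact hh_nonneg s (le_of_lt hs)
    have h0 : h 0 = 0 := by
      simp [hhdef, hΦdef, hGdef, intervalIntegral.integral_same]
    have hle := hmono Set.self_mem_Ici (Set.mem_Ici.mpr ht) ht
    rw [h0] at hle
    simp only [hhdef, hGdef] at hle
    linarith
  intro t ht
  have hE0 : E 0 = ⟪B u₀, u₀⟫ := by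
    simp [hEdef, hv0, hvi0]
  have hgoal : Real.sqrt (E t) ≤ Real.sqrt ⟪B u₀, u₀⟫ + Φ t := by
    refine le_of_forall_pos_le_add ?_
    intro η hη
    have h1 : Real.sqrt (E t) ≤ Real.sqrt (E t + η ^ 2) :=
      Real.sqrt_le_sqrt (by nlinarith)
    have h2 := main (η ^ 2) (by positivity) t ht
    have h3 : Real.sqrt (E 0 + η ^ 2) ≤ Real.sqrt (E 0) + η := by
      have hbd : E 0 + η ^ 2 ≤ (Real.sqrt (E 0) + η) ^ 2 := by
        nlinarith [Real.sq_sqrt (hE_nonneg 0), Real.sqrt_nonneg (E 0)]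
      calc Real.sqrt (E 0 + η ^ 2) ≤ Real.sqrt ((Real.sqrt (E 0) + η) ^ 2) :=
            Real.sqrt_le_sqrt hbd
        _ = Real.sqrt (E 0) + η := Real.sqrt_sq (by positivity)
    rw [hE0] at h2 h3
    linarith
  rw [hEdef, hΦdef, hψdef] at hgoal
  simpa using hgoal
end
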